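/- arXiv:2407.06652 — 6 statements merged into one kernel-verified Lean document; each statement's English description precedes it below -/
import Mathlib

section
/- For k ≥ 3, the strong domination number of the proper enhanced power graph of the generalized quaternion group Q_{2^k} satisfies γ^strong(G_E**(Q_{2^k})) = 2^{k-1} + 2. -/
open SimpleGraph

/-- The enhanced power graph of a group `G`: distinct `x, y` are adjacent iff
both lie in a common cyclic subgroup `⟨w⟩`. -/
def enhancedPowerGraph (G : Type*) [Group G] : SimpleGraph G where
  Adj x y := x ≠ y ∧ ∃ w : G, x ∈ Subgroup.zpowers w ∧ y ∈ Subgroup.zpowers w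
  symm := by
    constructor
    rintro x y ⟨hxy, w, hx, hy⟩
    exact ⟨hxy.symm, w, hy, hx⟩
  loopless := by
    constructor
    rintro x ⟨hxx, -⟩
    exact hxx rfl

/-- The set of dominating vertices of a graph: vertices adjacent to every other vertex. -/
def SimpleGraph.domVerts {V : Type*} (Γ : SimpleGraph V) : Set V :=
  {v | ∀ u, u ≠ v → Γ.Adj v u}

/-- The proper enhanced power graph: the enhanced power graph induced on the complement of
its set of dominating vertices. -/
def properEnhancedPowerGraph (G : Type*) [Group G] :
    SimpleGraph ((enhancedPowerGraph G).domVertsᶜ : Set G) :=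
  SimpleGraph.induce ((enhancedPowerGraph G).domVertsᶜ) (enhancedPowerGraph G)

/-- A total (strongly) dominating set: every vertex has a neighbor in `D`. -/
def SimpleGraph.IsTotalDominatingSet {V : Type*} (Γ : SimpleGraph V) (D : Set V) : Prop :=
  ∀ v : V, ∃ u ∈ D, Γ.Adj v u

/-- The strong domination number: minimum size of a total dominating set. -/
noncomputable def SimpleGraph.strongDominationNumber {V : Type*} (Γ : SimpleGraph V) : ℕ :=
  sInf {n : ℕ | ∃ D : Set V, Γ.IsTotalDominatingSet D ∧ D.ncard = n}

/-- A dominating set: every vertex not in `D` has a neighbor in `D`. -/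
def SimpleGraph.IsDominatingSet {V : Type*} (Γ : SimpleGraph V) (D : Set V) : Prop :=
  ∀ v ∉ D, ∃ u ∈ D, Γ.Adj v u

/-- The domination number: minimum size of a dominating set. -/
noncomputable def SimpleGraph.dominationNumber {V : Type*} (Γ : SimpleGraph V) : ℕ :=
  sInf {n : ℕ | ∃ D : Set V, Γ.IsDominatingSet D ∧ D.ncard = n}

/-- `G` is a generalized quaternion group `Q_{2^k}` for some `k ≥ 3`. -/
def IsGeneralizedQuaternion (G : Type*) [Group G] : Prop :=
  ∃ k : ℕ, 3 ≤ k ∧ Nonempty (G ≃* QuaternionGroup (2 ^ (k - 2)))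

/-- The number of subgroups of `G` of order `p`. -/
noncomputable def numSubgroupsOfOrder (G : Type*) [Group G] (p : ℕ) : ℕ :=
  Nat.card {H : Subgroup G // Nat.card H = p}

set_option linter.unusedSectionVars false

namespace QuatHelper

open QuaternionGroup Subgroup

variable {n : ℕ}


lemma two_n_ne [NeZero n] : NeZero (2 * n) := ⟨by have := NeZero.pos n; omega⟩

lemma cast_ne {x y : ℕ} (hx : x < 2 * n) (hy : y < 2 * n) (hxy : x ≠ y) :
    ((x : ZMod (2 * n)) ≠ (y : ZMod (2 * n))) := by
  intro h
  apply hxy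
  have := congrArg ZMod.val h
  rwa [ZMod.val_natCast_of_lt hx, ZMod.val_natCast_of_lt hy] at this

lemma hnn [NeZero n] : (n : ZMod (2 * n)) + n = 0 := by
  rw [← Nat.cast_add, ← two_mul]
  exact ZMod.natCast_self _

lemma hneg [NeZero n] : -(n : ZMod (2 * n)) = n :=
  (neg_eq_of_add_eq_zero_left hnn)

lemma xa_pow_three [NeZero n] (j : ZMod (2 * n)) :
    (xa j : QuaternionGroup n) ^ 3 = xa ((n : ZMod (2 * n)) + j) := by
  rw [pow_succ, xa_sq, a_mul_xa]
  congr 1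
  rw [sub_eq_add_neg, hneg, add_comm]

lemma mem_zpowers_a [NeZero n] {j : ZMod (2 * n)} {g : QuaternionGroup n}
    (hg : g ∈ Subgroup.zpowers (a j)) : ∃ i, g = a i := by
  haveI := two_n_ne (n := n)
  rw [← mem_powers_iff_mem_zpowers] at hg
  obtain ⟨m, hm'⟩ := hg
  have hm : a j ^ m = g := hm'
  have hj : (a j : QuaternionGroup n) = a 1 ^ (j.val) := by
    rw [a_one_pow, ZMod.natCast_zmod_val]
  rw [hj, ← pow_mul, a_one_pow] at hm
  exact ⟨_, hm.symm⟩

lemma eq_of_mem_zpowers_xa [NeZero n] {j : ZMod (2 * n)} {g : QuaternionGroup n}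
    (hg : g ∈ Subgroup.zpowers (xa j)) :
    g = 1 ∨ g = a (n : ZMod (2 * n)) ∨ g = xa j ∨ g = xa ((n : ZMod (2 * n)) + j) := by
  rw [← mem_powers_iff_mem_zpowers] at hg
  obtain ⟨m, hm'⟩ := hg
  have hm : xa j ^ (m % orderOf (xa j)) = g := by rw [pow_mod_orderOf]; exact hm'
  rw [orderOf_xa] at hm
  have h4 : m % 4 = 0 ∨ m % 4 = 1 ∨ m % 4 = 2 ∨ m % 4 = 3 := by omega
  rcases h4 with h | h | h | h <;> rw [h] at hm
  · left; rw [← hm]; rfl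
  · right; right; left; rw [← hm, pow_one]
  · right; left; rw [← hm, xa_sq]
  · right; right; right; rw [← hm, xa_pow_three]

lemma a_mem_zpowers_a_one [NeZero n] (i : ZMod (2 * n)) :
    (a i : QuaternionGroup n) ∈ Subgroup.zpowers (a 1) := by
  haveI := two_n_ne (n := n)
  have : (a i : QuaternionGroup n) = a 1 ^ (i.val) := by
    rw [a_one_pow, ZMod.natCast_zmod_val]
  rw [this]
  exact pow_mem (Subgroup.mem_zpowers _) _

lemma xa_not_mem_zpowers_a [NeZero n] (i j : ZMod (2 * n)) :
    (xa i : QuaternionGroup n) ∉ Subgroup.zpowers (a j) := by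
  intro h
  obtain ⟨m, hm⟩ := mem_zpowers_a h
  cases hm


lemma epg_adj {G : Type*} [Group G] (x y : G) :
    (enhancedPowerGraph G).Adj x y ↔
      x ≠ y ∧ ∃ w, x ∈ Subgroup.zpowers w ∧ y ∈ Subgroup.zpowers w := Iff.rfl

section
variable [NeZero n] (hn : 2 ≤ n)
include hn

lemma one_ne_zero' : (1 : ZMod (2 * n)) ≠ 0 := by
  have := cast_ne (n := n) (x := 1) (y := 0) (by omega) (by omega) (by omega)
  simpa using this

lemma one_ne_n : (1 : ZMod (2 * n)) ≠ (n : ZMod (2 * n)) := by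
  have := cast_ne (n := n) (x := 1) (y := n) (by omega) (by omega) (by omega)
  simpa using this

lemma n_ne_zero : (n : ZMod (2 * n)) ≠ 0 := by
  have := cast_ne (n := n) (x := n) (y := 0) (by omega) (by omega) (by omega)
  simpa using this

lemma n1_ne_zero : (n : ZMod (2 * n)) + 1 ≠ 0 := by
  have := cast_ne (n := n) (x := n + 1) (y := 0) (by omega) (by omega) (by omega)
  simpa [Nat.cast_add] using this

lemma n1_ne_n : (n : ZMod (2 * n)) + 1 ≠ (n : ZMod (2 * n)) := by
  intro h
  exact one_ne_zero' hn (by linear_combination h)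

/-- If `a i` is adjacent to anything via the enhanced power graph and the other endpoint is an
`xa`, then `i = 0` or `i = n`. -/
lemma a_adj_xa (i j : ZMod (2 * n))
    (h : (enhancedPowerGraph (QuaternionGroup n)).Adj (a i) (xa j)) :
    i = 0 ∨ i = (n : ZMod (2 * n)) := by
  obtain ⟨-, w, hw1, hw2⟩ := h
  cases w with
  | a m => exact absurd hw2 (xa_not_mem_zpowers_a _ _)
  | xa m =>
    rcases eq_of_mem_zpowers_xa hw1 with h | h | h | h
    · left; injection h with h'  -- a i = 1 = a 0
    · right; injection h with h'
    · exact absurd h (by simp)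
    · exact absurd h (by simp)

/-- The only possible neighbor of `xa i` that is neither `1` nor `a n` is `xa (n + i)`. -/
lemma xa_adj (i : ZMod (2 * n)) {g : QuaternionGroup n}
    (h : (enhancedPowerGraph (QuaternionGroup n)).Adj (xa i) g)
    (h1 : g ≠ 1) (h2 : g ≠ a (n : ZMod (2 * n))) : g = xa ((n : ZMod (2 * n)) + i) := by
  obtain ⟨hne, w, hw1, hw2⟩ := h
  cases w with
  | a m => exact absurd hw1 (xa_not_mem_zpowers_a _ _)
  | xa m =>
    rcases eq_of_mem_zpowers_xa hw1 with h | h | h | h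
    · exact absurd h (by rw [QuaternionGroup.one_def]; intro h; cases h)
    · exact absurd h (by simp)
    · -- xa i = xa m
      injection h with h'
      subst h'
      rcases eq_of_mem_zpowers_xa hw2 with h | h | h | h
      · exact absurd h h1
      · exact absurd h h2
      · exact absurd h.symm hne
      · exact h
    · -- xa i = xa (n + m), so m = n + i
      injection h with h'
      have hm : m = (n : ZMod (2 * n)) + i := by
        have := congrArg (fun x => (n : ZMod (2 * n)) + x) h'.symm
        simpa [← add_assoc, hnn] using this
      subst hm
      rcases eq_of_mem_zpowers_xa hw2 with h | h | h | h
      · exact absurd h h1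
      · exact absurd h h2
      · exact h
      · rw [← add_assoc, hnn, zero_add] at h
        exact absurd h.symm hne

lemma domVerts_eq :
    (enhancedPowerGraph (QuaternionGroup n)).domVerts
      = {1, a (n : ZMod (2 * n))} := by
  ext v
  simp only [SimpleGraph.domVerts, Set.mem_setOf_eq, Set.mem_insert_iff,
    Set.mem_singleton_iff]
  constructor
  · intro hv
    by_contra hc
    push_neg at hc
    obtain ⟨hc1, hc2⟩ := hc
    cases v with
    | a i =>
      have hi0 : i ≠ 0 := fun h => hc1 (by rw [h]; rfl)
      have hin : i ≠ (n : ZMod (2 * n)) := fun h => hc2 (by rw [h])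
      have := hv (xa 0) (by simp)
      rcases a_adj_xa hn _ _ this with h | h
      · exact hi0 h
      · exact hin h
    | xa i =>
      have := hv (a 1) (by simp)
      have h := ((enhancedPowerGraph (QuaternionGroup n)).adj_symm this)
      rcases a_adj_xa hn _ _ h with h | h
      · exact one_ne_zero' hn h
      · exact one_ne_n hn h
  · rintro (rfl | rfl)
    · intro u hu
      exact ⟨hu.symm, u, Subgroup.one_mem _, Subgroup.mem_zpowers u⟩
    · intro u hu
      cases u with
      | a i =>
        exact ⟨hu.symm, a 1, a_mem_zpowers_a_one _, a_mem_zpowers_a_one _⟩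
      | xa i =>
        refine ⟨hu.symm, xa i, ?_, Subgroup.mem_zpowers _⟩
        rw [← xa_sq i]
        exact pow_mem (Subgroup.mem_zpowers _) 2

end

section
variable [NeZero n] (hn : 2 ≤ n)
include hn

lemma mem_vset {g : QuaternionGroup n} :
    g ∈ ((enhancedPowerGraph (QuaternionGroup n)).domVertsᶜ : Set (QuaternionGroup n))
      ↔ g ≠ 1 ∧ g ≠ a (n : ZMod (2 * n)) := by
  rw [Set.mem_compl_iff, domVerts_eq hn]
  simp [not_or]

lemma xa_mem_vset (i : ZMod (2 * n)) :
    (xa i : QuaternionGroup n) ∈ ((enhancedPowerGraph (QuaternionGroup n)).domVertsᶜ) := by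
  rw [mem_vset hn]
  exact ⟨(by rw [QuaternionGroup.one_def]; intro h; cases h), by simp⟩

lemma a_mem_vset {i : ZMod (2 * n)} (h0 : i ≠ 0) (hni : i ≠ (n : ZMod (2 * n))) :
    (a i : QuaternionGroup n) ∈ ((enhancedPowerGraph (QuaternionGroup n)).domVertsᶜ) := by
  rw [mem_vset hn]
  exact ⟨by rw [QuaternionGroup.one_def]; intro h; exact h0 (a.inj h), by simp [hni]⟩

end

section
variable (n : ℕ) [NeZero n] (hn : 2 ≤ n)

/-- The `xa` vertices, as elements of the vertex set of the proper enhanced power graph. -/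
noncomputable def vxa (i : ZMod (2 * n)) :
    ((enhancedPowerGraph (QuaternionGroup n)).domVertsᶜ : Set (QuaternionGroup n)) :=
  ⟨xa i, xa_mem_vset hn i⟩

noncomputable def va1 :
    ((enhancedPowerGraph (QuaternionGroup n)).domVertsᶜ : Set (QuaternionGroup n)) :=
  ⟨a 1, a_mem_vset hn (one_ne_zero' hn) (one_ne_n hn)⟩

noncomputable def van1 :
    ((enhancedPowerGraph (QuaternionGroup n)).domVertsᶜ : Set (QuaternionGroup n)) :=
  ⟨a ((n : ZMod (2 * n)) + 1), a_mem_vset hn (n1_ne_zero hn) (n1_ne_n hn)⟩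

/-- The set of all `xa` vertices. -/
def Xset : Set ((enhancedPowerGraph (QuaternionGroup n)).domVertsᶜ : Set (QuaternionGroup n)) :=
  {v | ∃ i, v.1 = xa i}

end

section
variable {n : ℕ} [NeZero n] (hn : 2 ≤ n)
include hn

lemma peg_adj (u v : ((enhancedPowerGraph (QuaternionGroup n)).domVertsᶜ : Set (QuaternionGroup n))) :
    (properEnhancedPowerGraph (QuaternionGroup n)).Adj u v ↔
      (enhancedPowerGraph (QuaternionGroup n)).Adj u.1 v.1 := Iff.rfl

lemma Xset_eq : Xset n = Set.range (vxa n hn) := by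
  ext v
  constructor
  · rintro ⟨i, hi⟩
    exact ⟨i, by simp [vxa, ← hi]⟩
  · rintro ⟨i, rfl⟩
    exact ⟨i, rfl⟩

lemma Xset_ncard : (Xset n).ncard = 2 * n := by
  have hinj : Function.Injective (vxa n hn) := by
    intro i j h
    have := congrArg Subtype.val h
    simpa [vxa] using this
  rw [Xset_eq hn, ← Nat.card_coe_set_eq, Nat.card_range_of_injective hinj,
    Nat.card_zmod]

lemma adj_aa {i j : ZMod (2 * n)} (hij : i ≠ j) :
    (enhancedPowerGraph (QuaternionGroup n)).Adj (a i) (a j) :=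
  ⟨by simp [hij], a 1, a_mem_zpowers_a_one i, a_mem_zpowers_a_one j⟩

lemma adj_xa_xa (i : ZMod (2 * n)) :
    (enhancedPowerGraph (QuaternionGroup n)).Adj (xa i) (xa ((n : ZMod (2 * n)) + i)) := by
  refine ⟨?_, xa i, Subgroup.mem_zpowers _, ?_⟩
  · simp only [ne_eq, xa.injEq]
    intro h
    exact n_ne_zero hn (by linear_combination -h)
  · rw [← xa_pow_three i]
    exact pow_mem (Subgroup.mem_zpowers _) 3

end
end QuatHelper

namespace Main

open QuatHelper QuaternionGroup

theorem helper (n : ℕ) [NeZero n] (hn : 2 ≤ n) :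
    (properEnhancedPowerGraph (QuaternionGroup n)).strongDominationNumber = 2 * n + 2 := by
  classical
  set V := ((enhancedPowerGraph (QuaternionGroup n)).domVertsᶜ : Set (QuaternionGroup n))
  -- the candidate set
  set D : Set V := insert (va1 n hn) (insert (van1 n hn) (Xset n)) with hD
  have hva1_ne : (va1 n hn : V) ∉ insert (van1 n hn) (Xset n) := by
    simp only [Set.mem_insert_iff, not_or]
    constructor
    · intro h
      have := congrArg Subtype.val h
      simp only [va1, van1, a.injEq] at this
      exact n_ne_zero hn (by linear_combination -this)
    · rintro ⟨i, hi⟩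
      simp [va1] at hi
  have hvan1_ne : (van1 n hn : V) ∉ Xset n := by
    rintro ⟨i, hi⟩
    simp [van1] at hi
  have hDcard : D.ncard = 2 * n + 2 := by
    rw [hD, Set.ncard_insert_of_notMem hva1_ne, Set.ncard_insert_of_notMem hvan1_ne,
      Xset_ncard hn]
  -- D is total dominating
  have hDtd : (properEnhancedPowerGraph (QuaternionGroup n)).IsTotalDominatingSet D := by
    rintro ⟨v, hv⟩
    rw [mem_vset hn] at hv
    obtain ⟨hv1, hvn⟩ := hv
    cases v with
    | a i =>
      have hi0 : i ≠ 0 := fun h => hv1 (by rw [h]; rfl)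
      have hin : i ≠ (n : ZMod (2 * n)) := fun h => hvn (by rw [h])
      by_cases h1 : i = 1
      · refine ⟨van1 n hn, by simp [hD], ?_⟩
        rw [peg_adj hn]
        exact adj_aa hn (by rw [h1]; intro h; exact n_ne_zero hn (by linear_combination -h))
      · refine ⟨va1 n hn, by simp [hD], ?_⟩
        rw [peg_adj hn]
        exact adj_aa hn h1
    | xa i =>
      refine ⟨vxa n hn ((n : ZMod (2 * n)) + i), ?_, ?_⟩
      · simp only [hD, Set.mem_insert_iff]
        right; right
        exact ⟨_, rfl⟩
      · rw [peg_adj hn]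
        exact adj_xa_xa hn i
  -- lower bound
  have hlow : ∀ E : Set V,
      (properEnhancedPowerGraph (QuaternionGroup n)).IsTotalDominatingSet E →
      2 * n + 2 ≤ E.ncard := by
    intro E hE
    -- all xa vertices are in E
    have hXE : Xset n ⊆ E := by
      rintro v ⟨i, hvi⟩
      obtain ⟨u, huE, huadj⟩ := hE (vxa n hn ((n : ZMod (2 * n)) + i))
      rw [peg_adj hn] at huadj
      have hu2 := (mem_vset hn).mp u.2
      have : (u : QuaternionGroup n) = xa ((n : ZMod (2 * n)) + ((n : ZMod (2 * n)) + i)) :=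
        xa_adj hn _ huadj hu2.1 hu2.2
      rw [← add_assoc, hnn, zero_add] at this
      have huv : u = v := Subtype.ext (by rw [this, hvi])
      rwa [← huv]
    -- a neighbor of `va1` in E is an `a`-vertex
    obtain ⟨u1, hu1E, hu1adj⟩ := hE (va1 n hn)
    rw [peg_adj hn] at hu1adj
    have hu1v := (mem_vset hn).mp u1.2
    obtain ⟨j1, hj1⟩ : ∃ j, (u1 : QuaternionGroup n) = a j := by
      rcases hu : (u1 : QuaternionGroup n) with j | j
      · exact ⟨j, rfl⟩
      · rw [hu] at hu1adj
        rcases a_adj_xa hn _ _ hu1adj with h | h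
        · exact absurd h (one_ne_zero' hn)
        · exact absurd h (one_ne_n hn)
    obtain ⟨u2, hu2E, hu2adj⟩ := hE u1
    rw [peg_adj hn] at hu2adj
    obtain ⟨j2, hj2⟩ : ∃ j, (u2 : QuaternionGroup n) = a j := by
      rcases hu : (u2 : QuaternionGroup n) with j | j
      · exact ⟨j, rfl⟩
      · rw [hj1, hu] at hu2adj
        have hu1nd := (mem_vset hn).mp u1.2
        rcases a_adj_xa hn _ _ hu2adj with h | h
        · exact absurd (by rw [hj1, h]; rfl) hu1nd.1
        · exact absurd (by rw [hj1, h]) hu1nd.2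
    have hS : insert u1 (insert u2 (Xset n)) ⊆ E := by
      intro v hv
      rcases hv with rfl | rfl | hv
      · exact hu1E
      · exact hu2E
      · exact hXE hv
    have hu1X : u1 ∉ insert u2 (Xset n) := by
      simp only [Set.mem_insert_iff, not_or]
      refine ⟨fun h => hu2adj.1 (congrArg Subtype.val h), ?_⟩
      rintro ⟨i, hi⟩
      rw [hj1] at hi
      cases hi
    have hu2X : u2 ∉ Xset n := by
      rintro ⟨i, hi⟩
      rw [hj2] at hi
      cases hi
    calc 2 * n + 2 = (insert u1 (insert u2 (Xset n))).ncard := by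
          rw [Set.ncard_insert_of_notMem hu1X, Set.ncard_insert_of_notMem hu2X,
            Xset_ncard hn]
      _ ≤ E.ncard := Set.ncard_le_ncard hS E.toFinite
  -- conclude
  apply le_antisymm
  · exact Nat.sInf_le ⟨D, hDtd, hDcard⟩
  · exact le_csInf ⟨2 * n + 2, D, hDtd, hDcard⟩ (by rintro m ⟨E, hE, rfl⟩; exact hlow E hE)

end Main

/-- For `k ≥ 3`, `γ^strong(G_E**(Q_{2^k})) = 2^{k-1} + 2`. -/
theorem stmt_4 (k : ℕ) (hk : 3 ≤ k) :
    (properEnhancedPowerGraph (QuaternionGroup (2 ^ (k - 2)))).strongDominationNumber =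
      2 ^ (k - 1) + 2 := by
  haveI : NeZero (2 ^ (k - 2)) := ⟨pow_ne_zero _ two_ne_zero⟩
  have hn : 2 ≤ 2 ^ (k - 2) := by
    calc 2 = 2 ^ 1 := (pow_one 2).symm
    _ ≤ 2 ^ (k - 2) := Nat.pow_le_pow_right (by norm_num) (by omega)
  rw [Main.helper _ hn]
  have hk1 : k - 1 = (k - 2) + 1 := by omega
  rw [hk1, pow_succ]
  ring
end

section
/- Let k ≥ 3 and let n be a positive integer with gcd(n, 2) = 1. Then the strong domination number of the proper enhanced power graph of G = Z_n × Q_{2^k} satisfies γ^strong(G_E**(Z_n × Q_{2^k})) = 2^{k-1} + 2. -/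
open SimpleGraph

set_option linter.unusedSectionVars false
set_option linter.unusedVariables false

open Subgroup QuaternionGroup

section Quat
variable {m : ℕ} [NeZero m]

lemma a_pow' (i : ZMod (2*m)) (t : ℕ) :
    (a i : QuaternionGroup m) ^ t = a ((t : ZMod (2*m)) * i) := by
  conv_lhs => rw [← ZMod.natCast_zmod_val i, ← a_one_pow]
  rw [← pow_mul, a_one_pow]
  congr 1
  push_cast [ZMod.natCast_zmod_val]
  ring

lemma mem_zpowers_a {y : QuaternionGroup m} {j : ZMod (2*m)}
    (hy : y ∈ zpowers (a j)) : ∃ i, y = a i := by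
  rw [← mem_powers_iff_mem_zpowers] at hy
  obtain ⟨t, rfl⟩ := hy
  exact ⟨(t : ZMod (2*m)) * j, a_pow' j t⟩

lemma neg_m_eq : (-(m : ZMod (2*m))) = (m : ZMod (2*m)) := by
  have h : ((2*m : ℕ) : ZMod (2*m)) = 0 := ZMod.natCast_self _
  push_cast at h
  linear_combination -h

lemma xa_pow_three (j : ZMod (2*m)) :
    (xa j : QuaternionGroup m) ^ 3 = xa (j + (m : ZMod (2*m))) := by
  have h3 : (xa j : QuaternionGroup m) ^ 3 = (xa j) ^ 2 * xa j := by
    rw [pow_succ]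
  rw [h3, xa_sq, a_mul_xa, sub_eq_add_neg, neg_m_eq]

lemma mem_zpowers_xa {y : QuaternionGroup m} {j : ZMod (2*m)}
    (hy : y ∈ zpowers (xa j)) :
    y = 1 ∨ y = a m ∨ y = xa j ∨ y = xa (j + (m : ZMod (2*m))) := by
  rw [← mem_powers_iff_mem_zpowers] at hy
  obtain ⟨t, ht⟩ := hy
  simp only at ht
  rw [← ht, ← pow_mod_orderOf, orderOf_xa]
  have h4 : t % 4 < 4 := Nat.mod_lt _ (by norm_num)
  interval_cases h : (t % 4)
  · simp
  · simp
  · rw [xa_sq]; tauto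
  · rw [xa_pow_three]; tauto

end Quat

section Quat
variable {m : ℕ} [NeZero m]

lemma eq_a_m_of_orderOf_eq_two {q : QuaternionGroup m} (hq : orderOf q = 2) :
    q = a (m : ZMod (2*m)) := by
  cases q with
  | xa i => rw [orderOf_xa] at hq; norm_num at hq
  | a i =>
    have hne : a i ≠ (1 : QuaternionGroup m) := by
      intro h; rw [h, orderOf_one] at hq; norm_num at hq
    have hsq : (a i : QuaternionGroup m) ^ 2 = 1 := by
      rw [← hq]; exact pow_orderOf_eq_one _
    rw [sq, a_mul_a, one_def] at hsq
    have h2 : i + i = 0 := by injection hsq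
    have hv : (2 * m : ℕ) ∣ 2 * i.val := by
      have : ((2 * i.val : ℕ) : ZMod (2*m)) = 0 := by
        push_cast [ZMod.natCast_zmod_val]
        linear_combination h2
      exact (ZMod.natCast_eq_zero_iff _ _).mp this
    obtain ⟨c, hc0⟩ := hv
    have hc : i.val = m * c := by
      refine Nat.eq_of_mul_eq_mul_left (show 0 < 2 by norm_num) ?_
      rw [hc0]; ring
    have hlt : i.val < 2 * m := ZMod.val_lt i
    have hvne : i.val ≠ 0 := by
      intro h
      apply hne
      rw [← ZMod.natCast_zmod_val i, h]
      simp [-a_zero, one_def]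
    have hc1 : c = 1 := by
      rcases c with _ | c
      · simp at hc; omega
      · rcases c with _ | c
        · rfl
        · exfalso
          have h2 : m * 2 ≤ m * (c + 1 + 1) := Nat.mul_le_mul_left _ (by omega)
          omega
    rw [← ZMod.natCast_zmod_val i, hc, hc1, mul_one]

lemma a_m_mem_zpowers {s : ℕ} (hm : m = 2 ^ s) {q : QuaternionGroup m} (hq : q ≠ 1) :
    a (m : ZMod (2*m)) ∈ zpowers q := by
  cases q with
  | xa i => exact mem_powers_iff_mem_zpowers.mp ⟨2, xa_sq i⟩
  | a i =>
    have hdvd : orderOf (a i : QuaternionGroup m) ∣ 2 ^ (s + 2) := by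
      have h1 : orderOf (a i : QuaternionGroup m) ∣ Fintype.card (QuaternionGroup m) :=
        orderOf_dvd_card
      rw [QuaternionGroup.card] at h1
      have h2 : 2 ^ (s+2) = 4 * m := by rw [hm]; ring
      rwa [h2]
    obtain ⟨t, ht, hord⟩ := (Nat.dvd_prime_pow Nat.prime_two).mp hdvd
    have ht1 : 1 ≤ t := by
      rcases Nat.eq_zero_or_pos t with h | h
      · exfalso
        rw [h, pow_zero, orderOf_eq_one_iff] at hord
        exact hq hord
      · exact h
    have key : orderOf ((a i : QuaternionGroup m) ^ 2 ^ (t-1)) = 2 := by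
      rw [orderOf_pow, hord, Nat.gcd_eq_right (pow_dvd_pow 2 (by omega)),
        Nat.pow_div (by omega) (by norm_num), show t-(t-1)=1 by omega, pow_one]
    have := eq_a_m_of_orderOf_eq_two key
    rw [← this]
    exact mem_powers_iff_mem_zpowers.mp ⟨2^(t-1), rfl⟩

end Quat



section Main
variable {n m : ℕ} [NeZero n] [NeZero m]

-- projection of zpowers membership
lemma mem_zpowers_snd {A B : Type*} [Group A] [Group B] {x w : A × B}
    (h : x ∈ zpowers w) : x.2 ∈ zpowers w.2 := by
  obtain ⟨t, rfl⟩ := mem_zpowers_iff.mp h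
  exact ⟨t, by simp⟩

lemma orderOf_q_dvd {s : ℕ} (hm : m = 2 ^ s) (q : QuaternionGroup m) :
    orderOf q ∣ 2 ^ (s + 2) := by
  have h1 : orderOf q ∣ Fintype.card (QuaternionGroup m) := orderOf_dvd_card
  rw [QuaternionGroup.card] at h1
  have h2 : 2 ^ (s+2) = 4 * m := by rw [hm]; ring
  rwa [h2]

lemma coprime_orders {s : ℕ} (hn : Nat.Coprime n 2) (hm : m = 2 ^ s)
    (q : QuaternionGroup m) :
    Nat.Coprime (orderOf (Multiplicative.ofAdd (1 : ZMod n))) (orderOf q) := by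
  rw [orderOf_ofAdd_eq_addOrderOf, ZMod.addOrderOf_one]
  exact Nat.Coprime.coprime_dvd_right (orderOf_q_dvd hm q) (hn.pow_right (s+2))

lemma prod_mem_zpowers {A B : Type*} [Group A] [Group B] [Finite A] [Finite B]
    {g : A} {q : B} (hco : Nat.Coprime (orderOf g) (orderOf q))
    {c : A} (hc : c ∈ zpowers g) {q' : B} (hq : q' ∈ zpowers q) :
    (c, q') ∈ zpowers (g, q) := by
  rw [← mem_powers_iff_mem_zpowers] at hc hq ⊢
  obtain ⟨e₁, rfl⟩ := hc
  obtain ⟨e₂, rfl⟩ := hq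
  obtain ⟨t, ht₁, ht₂⟩ := Nat.chineseRemainder hco e₁ e₂
  refine ⟨t, ?_⟩
  have h1 : g ^ t = g ^ e₁ := pow_eq_pow_iff_modEq.mpr ht₁
  have h2 : q ^ t = q ^ e₂ := pow_eq_pow_iff_modEq.mpr ht₂
  simp [Prod.pow_mk, h1, h2]

lemma mem_zpowers_g (c : Multiplicative (ZMod n)) :
    c ∈ zpowers (Multiplicative.ofAdd (1 : ZMod n)) := by
  rw [← mem_powers_iff_mem_zpowers]
  refine ⟨(Multiplicative.toAdd c).val, ?_⟩
  show Multiplicative.ofAdd (1 : ZMod n) ^ (Multiplicative.toAdd c).val = c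
  rw [← ofAdd_nsmul]
  conv_rhs => rw [← ofAdd_toAdd c]
  congr 1
  rw [nsmul_eq_mul, mul_one, ZMod.natCast_zmod_val]

/-- key adjacency constructor -/
lemma adj_of_common {s : ℕ} (hn : Nat.Coprime n 2) (hm : m = 2 ^ s)
    {v u : Multiplicative (ZMod n) × QuaternionGroup m} (q : QuaternionGroup m)
    (hv : v.2 ∈ zpowers q) (hu : u.2 ∈ zpowers q) (hvu : v ≠ u) :
    (enhancedPowerGraph (Multiplicative (ZMod n) × QuaternionGroup m)).Adj v u :=
  ⟨hvu, (Multiplicative.ofAdd (1 : ZMod n), q),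
    prod_mem_zpowers (coprime_orders hn hm q) (mem_zpowers_g v.1) hv,
    prod_mem_zpowers (coprime_orders hn hm q) (mem_zpowers_g u.1) hu⟩

end Main
section DomV
variable {n m : ℕ} [NeZero n] [NeZero m]

lemma natCast_eq_zero_zmod2m {x : ℕ} (hx : 0 < x) (hx2 : x < 2*m) :
    ((x : ZMod (2*m)) ≠ 0) := by
  intro h
  have := (ZMod.natCast_eq_zero_iff x (2*m)).mp h
  have := Nat.le_of_dvd hx this
  omega

lemma one_ne_m_zmod {hm2 : 2 ≤ m} : (1 : ZMod (2*m)) ≠ (m : ZMod (2*m)) := by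
  intro h
  have h2 : ((m - 1 : ℕ) : ZMod (2*m)) = 0 := by
    push_cast [Nat.cast_sub (by omega : 1 ≤ m)]
    linear_combination -h
  exact natCast_eq_zero_zmod2m (by omega) (by omega) h2

lemma domVerts_eq {s : ℕ} (hn : Nat.Coprime n 2) (hm : m = 2 ^ s) (hs : 1 ≤ s) :
    (enhancedPowerGraph (Multiplicative (ZMod n) × QuaternionGroup m)).domVerts
      = {p | p.2 = 1 ∨ p.2 = a ((m : ZMod (2*m)))} := by
  have hm2 : 2 ≤ m := by rw [hm]; calc 2 = 2^1 := rfl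
    _ ≤ 2^s := Nat.pow_le_pow_right (by norm_num) hs
  ext p
  constructor
  · intro hp
    rcases hq : p.2 with i | i
    · -- p.2 = a i : use u := (p.1, xa 0)
      have hne : (p.1, (xa 0 : QuaternionGroup m)) ≠ p := by
        intro h
        rw [← h] at hq
        simp at hq
      obtain ⟨-, w, h1, h2⟩ := hp _ hne
      have hp2 : p.2 ∈ zpowers w.2 := mem_zpowers_snd h1
      have hu2 : (xa 0 : QuaternionGroup m) ∈ zpowers w.2 :=
        mem_zpowers_snd (x := (p.1, (xa 0 : QuaternionGroup m))) h2
      rcases hw : w.2 with j | j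
      · rw [hw] at hu2
        obtain ⟨i', hi'⟩ := mem_zpowers_a hu2
        simp at hi'
      · rw [hw] at hp2
        rcases mem_zpowers_xa hp2 with h | h | h | h
        · exact Or.inl h
        · exact Or.inr h
        · rw [hq] at h; simp at h
        · rw [hq] at h; simp at h
    · -- p.2 = xa i : use u := (p.1, a 1)
      have hne : (p.1, (a 1 : QuaternionGroup m)) ≠ p := by
        intro h
        rw [← h] at hq
        simp at hq
      obtain ⟨-, w, h1, h2⟩ := hp _ hne
      have hp2 : p.2 ∈ zpowers w.2 := mem_zpowers_snd h1
      have hu2 : (a 1 : QuaternionGroup m) ∈ zpowers w.2 :=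
        mem_zpowers_snd (x := (p.1, (a 1 : QuaternionGroup m))) h2
      rcases hw : w.2 with j | j
      · rw [hw, hq] at hp2
        obtain ⟨i', hi'⟩ := mem_zpowers_a hp2
        simp at hi'
      · exfalso
        rw [hw] at hu2
        rcases mem_zpowers_xa hu2 with h | h | h | h
        · rw [one_def] at h
          have : (1 : ZMod (2*m)) = 0 := by injection h
          exact natCast_eq_zero_zmod2m (m := m) (x := 1) (by norm_num) (by linarith) (by push_cast; exact this)
        · have : (1 : ZMod (2*m)) = (m : ZMod (2*m)) := by injection h
          exact one_ne_m_zmod (hm2 := hm2) this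
        · simp at h
        · simp at h
  · -- dominating direction
    rintro hp u hu
    refine adj_of_common hn hm (if u.2 = 1 then a ((m : ZMod (2*m))) else u.2) ?_ ?_ (Ne.symm hu)
    · rcases hp with h | h <;> rw [h]
      · split_ifs <;> exact one_mem _
      · split_ifs with h1
        · exact mem_zpowers _
        · exact a_m_mem_zpowers hm h1
    · split_ifs with h1
      · rw [h1]; exact one_mem _
      · exact mem_zpowers _

end DomV
section Count
variable {n m : ℕ} [NeZero n] [NeZero m]

/-- component index -/
def qcomp {m : ℕ} : QuaternionGroup m → Option (ZMod m) :=
  fun q => match q with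
  | .a _ => none
  | .xa i => some (ZMod.castHom (dvd_mul_left m 2) (ZMod m) i)

lemma qcomp_cast_add_m (j : ZMod (2*m)) :
    qcomp (xa (j + (m : ZMod (2*m)))) = qcomp (xa j) := by
  simp only [qcomp, map_add, map_natCast, ZMod.natCast_self, add_zero]

lemma mem_compl_domVerts {s : ℕ} (hn : Nat.Coprime n 2) (hm : m = 2 ^ s) (hs : 1 ≤ s)
    {p : Multiplicative (ZMod n) × QuaternionGroup m} :
    p ∈ (enhancedPowerGraph (Multiplicative (ZMod n) × QuaternionGroup m)).domVertsᶜ ↔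
      (p.2 ≠ 1 ∧ p.2 ≠ a ((m : ZMod (2*m)))) := by
  rw [Set.mem_compl_iff, domVerts_eq hn hm hs]
  simp only [Set.mem_setOf_eq]
  push_neg
  rfl

lemma adj_qcomp {s : ℕ} (hn : Nat.Coprime n 2) (hm : m = 2 ^ s) (hs : 1 ≤ s)
    {p u : Multiplicative (ZMod n) × QuaternionGroup m}
    (hpd : p.2 ≠ 1 ∧ p.2 ≠ a ((m : ZMod (2*m))))
    (hud : u.2 ≠ 1 ∧ u.2 ≠ a ((m : ZMod (2*m))))
    (h : (enhancedPowerGraph (Multiplicative (ZMod n) × QuaternionGroup m)).Adj p u) :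
    qcomp p.2 = qcomp u.2 := by
  obtain ⟨-, w, h1, h2⟩ := h
  have hp2 : p.2 ∈ zpowers w.2 := mem_zpowers_snd h1
  have hu2 : u.2 ∈ zpowers w.2 := mem_zpowers_snd h2
  rcases hw : w.2 with j | j
  · rw [hw] at hp2 hu2
    obtain ⟨i₁, hi₁⟩ := mem_zpowers_a hp2
    obtain ⟨i₂, hi₂⟩ := mem_zpowers_a hu2
    rw [hi₁, hi₂]
    rfl
  · rw [hw] at hp2 hu2
    have key : ∀ {q : QuaternionGroup m}, q ∈ zpowers (xa j) →
        q ≠ 1 → q ≠ a ((m : ZMod (2*m))) → qcomp q = qcomp (xa j) := by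
      intro q hq h1' h2'
      rcases mem_zpowers_xa hq with h | h | h | h
      · exact absurd h h1'
      · exact absurd h h2'
      · rw [h]
      · rw [h, qcomp_cast_add_m]
    rw [key hp2 hpd.1 hpd.2, key hu2 hud.1 hud.2]

end Count
theorem main_aux (n m s : ℕ) [NeZero n] [NeZero m] (hn : Nat.Coprime n 2)
    (hm : m = 2 ^ s) (hs : 1 ≤ s) :
    (properEnhancedPowerGraph
        (Multiplicative (ZMod n) × QuaternionGroup m)).strongDominationNumber = 2 * m + 2 := by
  have hm2 : 2 ≤ m := by
    rw [hm]
    calc 2 = 2^1 := rfl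
    _ ≤ 2^s := Nat.pow_le_pow_right (by norm_num) hs
  -- ZMod facts
  have h10 : (1 : ZMod (2*m)) ≠ 0 := by
    have := natCast_eq_zero_zmod2m (m := m) (x := 1) (by norm_num) (by linarith)
    rwa [Nat.cast_one] at this
  have h1m : (1 : ZMod (2*m)) ≠ (m : ZMod (2*m)) := one_ne_m_zmod (hm2 := hm2)
  have hm0 : ((m : ZMod (2*m))) ≠ 0 :=
    natCast_eq_zero_zmod2m (m := m) (by omega) (by omega)
  have hneg10 : (-1 : ZMod (2*m)) ≠ 0 := by
    intro h; apply h10; linear_combination -h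
  have hneg1m : (-1 : ZMod (2*m)) ≠ (m : ZMod (2*m)) := by
    intro h
    have h2 : ((m + 1 : ℕ) : ZMod (2*m)) = 0 := by push_cast; linear_combination -h
    exact natCast_eq_zero_zmod2m (m := m) (by omega) (by omega) h2
  have h1neg1 : (1 : ZMod (2*m)) ≠ -1 := by
    intro h
    have h2 : ((2 : ℕ) : ZMod (2*m)) = 0 := by push_cast; linear_combination h
    exact natCast_eq_zero_zmod2m (m := m) (by omega) (by omega) h2
  have him : ∀ i : ZMod (2*m), i ≠ i + (m : ZMod (2*m)) := by
    intro i h; apply hm0; linear_combination -h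
  -- vertex membership
  have hva : ∀ (c : Multiplicative (ZMod n)) (i : ZMod (2*m)), i ≠ 0 → i ≠ (m : ZMod (2*m)) →
      (c, (a i : QuaternionGroup m)) ∈
        (enhancedPowerGraph (Multiplicative (ZMod n) × QuaternionGroup m)).domVertsᶜ := by
    intro c i hi0 him'
    rw [mem_compl_domVerts hn hm hs]
    constructor
    · simp only [one_def, ne_eq, a.injEq]; exact hi0
    · simp only [ne_eq, a.injEq]; exact him'
  have hvxa : ∀ (c : Multiplicative (ZMod n)) (i : ZMod (2*m)),
      (c, (xa i : QuaternionGroup m)) ∈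
        (enhancedPowerGraph (Multiplicative (ZMod n) × QuaternionGroup m)).domVertsᶜ := by
    intro c i
    rw [mem_compl_domVerts hn hm hs]
    constructor <;> simp [-a_zero, one_def]
  -- zpowers facts
  have ha1 : ∀ i : ZMod (2*m), (a i : QuaternionGroup m) ∈ zpowers (a 1 : QuaternionGroup m) :=
    fun i => mem_powers_iff_mem_zpowers.mp
      ⟨i.val, by show (a 1 : QuaternionGroup m) ^ i.val = a i
                 rw [a_one_pow, ZMod.natCast_zmod_val]⟩
  have hxa3 : ∀ i : ZMod (2*m),
      (xa (i + (m : ZMod (2*m))) : QuaternionGroup m) ∈ zpowers (xa i : QuaternionGroup m) :=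
    fun i => mem_powers_iff_mem_zpowers.mp ⟨3, xa_pow_three i⟩
  -- fc and adjacency preservation in the proper graph
  set V := ((enhancedPowerGraph (Multiplicative (ZMod n) × QuaternionGroup m)).domVertsᶜ :
    Set (Multiplicative (ZMod n) × QuaternionGroup m)) with hV
  set fc : V → Option (ZMod m) := fun v => qcomp v.1.2 with hfcdef
  have hfc : ∀ v u : V,
      (properEnhancedPowerGraph (Multiplicative (ZMod n) × QuaternionGroup m)).Adj v u →
      fc v = fc u := by
    intro v u h
    exact adj_qcomp hn hm hs ((mem_compl_domVerts hn hm hs).mp v.2)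
      ((mem_compl_domVerts hn hm hs).mp u.2) h
  -- the witness dominating set
  set φ : Bool ⊕ ZMod (2*m) → V := fun x =>
    match x with
    | Sum.inl true => ⟨(1, (a 1 : QuaternionGroup m)), hva 1 1 h10 h1m⟩
    | Sum.inl false => ⟨(1, (a (-1) : QuaternionGroup m)), hva 1 (-1) hneg10 hneg1m⟩
    | Sum.inr i => ⟨(1, (xa i : QuaternionGroup m)), hvxa 1 i⟩
    with hφ
  have hφinj : Function.Injective φ := by
    rintro x y h
    have h2 := congrArg (fun v : ↥V => (v : Multiplicative (ZMod n) × QuaternionGroup m).2) h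
    rcases x with b | i <;> rcases y with b' | i'
    · cases b <;> cases b' <;> simp [hφ, a.injEq] at h2 ⊢ <;>
        [exact absurd h2.symm h1neg1; exact absurd h2 h1neg1]
    · cases b <;> simp [hφ] at h2
    · cases b' <;> simp [hφ] at h2
    · simp only [hφ, xa.injEq] at h2
      rw [h2]
  have htotal : (properEnhancedPowerGraph
      (Multiplicative (ZMod n) × QuaternionGroup m)).IsTotalDominatingSet (Set.range φ) := by
    intro v
    rcases hq : v.1.2 with i | i
    · by_cases hv1 : v.1 = ((1 : Multiplicative (ZMod n)), (a 1 : QuaternionGroup m))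
      · refine ⟨φ (Sum.inl false), ⟨Sum.inl false, rfl⟩, ?_⟩
        show (enhancedPowerGraph (Multiplicative (ZMod n) × QuaternionGroup m)).Adj
          (v : Multiplicative (ZMod n) × QuaternionGroup m)
          ((1, (a (-1) : QuaternionGroup m)) : Multiplicative (ZMod n) × QuaternionGroup m)
        refine adj_of_common hn hm (a 1 : QuaternionGroup m) ?_ ?_ ?_
        · show (v : Multiplicative (ZMod n) × QuaternionGroup m).2 ∈ zpowers _
          rw [hq]; exact ha1 i
        · exact ha1 (-1)
        · rw [hv1]
          intro hcon
          have := congrArg Prod.snd hcon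
          simp only [a.injEq] at this
          exact h1neg1 this
      · refine ⟨φ (Sum.inl true), ⟨Sum.inl true, rfl⟩, ?_⟩
        show (enhancedPowerGraph (Multiplicative (ZMod n) × QuaternionGroup m)).Adj
          (v : Multiplicative (ZMod n) × QuaternionGroup m)
          ((1, (a 1 : QuaternionGroup m)) : Multiplicative (ZMod n) × QuaternionGroup m)
        refine adj_of_common hn hm (a 1 : QuaternionGroup m) ?_ ?_ ?_
        · show (v : Multiplicative (ZMod n) × QuaternionGroup m).2 ∈ zpowers _
          rw [hq]; exact ha1 i
        · exact ha1 1
        · exact fun hcon => hv1 hcon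
    · refine ⟨φ (Sum.inr (i + (m : ZMod (2*m)))), ⟨Sum.inr _, rfl⟩, ?_⟩
      show (enhancedPowerGraph (Multiplicative (ZMod n) × QuaternionGroup m)).Adj
        (v : Multiplicative (ZMod n) × QuaternionGroup m)
        ((1, (xa (i + (m : ZMod (2*m))) : QuaternionGroup m)) :
          Multiplicative (ZMod n) × QuaternionGroup m)
      refine adj_of_common hn hm (xa i : QuaternionGroup m) ?_ ?_ ?_
      · show (v : Multiplicative (ZMod n) × QuaternionGroup m).2 ∈ zpowers _
        rw [hq]; exact mem_zpowers _
      · exact hxa3 i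
      · intro hcon
        have := congrArg Prod.snd hcon
        rw [hq] at this
        simp only [xa.injEq] at this
        exact him i this
  have hcard : (Set.range φ).ncard = 2 * m + 2 := by
    rw [← Nat.card_coe_set_eq, Nat.card_range_of_injective hφinj, Nat.card_sum,
      Nat.card_eq_fintype_card, Nat.card_zmod, Fintype.card_bool]
    ring
  -- lower bound
  have hlow : ∀ D : Set V,
      (properEnhancedPowerGraph
        (Multiplicative (ZMod n) × QuaternionGroup m)).IsTotalDominatingSet D →
      2 * m + 2 ≤ D.ncard := by
    intro D hD
    set vt : Option (ZMod m) → V := fun t =>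
      match t with
      | none => ⟨(1, (a 1 : QuaternionGroup m)), hva 1 1 h10 h1m⟩
      | some j => ⟨(1, (xa ((j.val : ZMod (2*m))) : QuaternionGroup m)), hvxa 1 _⟩
      with hvt
    have hft : ∀ t, fc (vt t) = t := by
      intro t
      match t with
      | none => rfl
      | some j =>
        show qcomp (xa ((j.val : ZMod (2*m))) : QuaternionGroup m) = some j
        simp only [qcomp, map_natCast, ZMod.natCast_zmod_val]
    have key : ∀ t : Option (ZMod m), ∃ u₁ u₂ : V,
        u₁ ∈ D ∧ u₂ ∈ D ∧ u₁ ≠ u₂ ∧ fc u₁ = t ∧ fc u₂ = t := by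
      intro t
      obtain ⟨w₁, hw₁, hadj₁⟩ := hD (vt t)
      obtain ⟨w₂, hw₂, hadj₂⟩ := hD w₁
      have e₁ : fc w₁ = t := (hfc _ _ hadj₁).symm.trans (hft t)
      have e₂ : fc w₂ = t := (hfc _ _ hadj₂).symm.trans e₁
      exact ⟨w₁, w₂, hw₁, hw₂, hadj₂.ne, e₁, e₂⟩
    choose u₁ u₂ hmem₁ hmem₂ hne hf₁ hf₂ using key
    set ψ : Option (ZMod m) × Bool → ↥D := fun p =>
      if p.2 then ⟨u₁ p.1, hmem₁ p.1⟩ else ⟨u₂ p.1, hmem₂ p.1⟩ with hψdef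
    have hψ : Function.Injective ψ := by
      rintro ⟨t, b⟩ ⟨t', b'⟩ h
      cases b <;> cases b' <;>
        simp only [hψdef, if_true, if_false, Bool.false_eq_true, Subtype.mk.injEq] at h
      · have ht : t = t' := by rw [← hf₂ t, ← hf₂ t', h]
        rw [ht]
      · exfalso
        have ht : t = t' := by rw [← hf₂ t, ← hf₁ t', h]
        subst ht
        exact hne t (h.symm)
      · exfalso
        have ht : t = t' := by rw [← hf₁ t, ← hf₂ t', h]
        subst ht
        exact hne t h
      · have ht : t = t' := by rw [← hf₁ t, ← hf₁ t', h]
        rw [ht]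
    have hle : Nat.card (Option (ZMod m) × Bool) ≤ Nat.card ↥D :=
      Nat.card_le_card_of_injective ψ hψ
    rw [Nat.card_eq_fintype_card, Fintype.card_prod, Fintype.card_option, ZMod.card,
      Fintype.card_bool, Nat.card_coe_set_eq] at hle
    omega
  -- conclude
  apply le_antisymm
  · exact Nat.sInf_le ⟨Set.range φ, htotal, hcard⟩
  · exact le_csInf ⟨2*m+2, Set.range φ, htotal, hcard⟩
      (by rintro N ⟨D', hD', rfl⟩; exact hlow D' hD')

/-- For `k ≥ 3` and `n` with `gcd(n, 2) = 1`,
`γ^strong(G_E**(ℤ_n × Q_{2^k})) = 2^{k-1} + 2`. -/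
theorem stmt_5 (k : ℕ) (hk : 3 ≤ k) (n : ℕ) [NeZero n] (hn : Nat.Coprime n 2) :
    (properEnhancedPowerGraph
        (Multiplicative (ZMod n) × QuaternionGroup (2 ^ (k - 2)))).strongDominationNumber =
      2 ^ (k - 1) + 2 := by
  haveI : NeZero (2 ^ (k-2)) := ⟨pow_ne_zero _ (by norm_num)⟩
  have h := main_aux n (2^(k-2)) (k-2) hn rfl (by omega)
  rw [h]
  have h2 : 2 * 2^(k-2) = 2^(k-1) := by
    rw [← pow_succ']
    congr 1
    omega
  omega
end

section
/- For k ≥ 3, the domination number of the proper enhanced power graph of the generalized quaternion group Q_{2^k} satisfies γ(G_E**(Q_{2^k})) = 2^{k-2} + 1. -/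
open SimpleGraph

open QuaternionGroup

section Aux

variable {n : ℕ}

lemma aux_pow_a (j : ZMod (2*n)) : ∀ t : ℤ, ∃ m, (a j : QuaternionGroup n) ^ t = a m := by
  have hnat : ∀ s : ℕ, ∃ m, (a j : QuaternionGroup n) ^ s = a m := by
    intro s
    induction s with
    | zero => exact ⟨0, rfl⟩
    | succ s ih =>
      obtain ⟨m, hm⟩ := ih
      exact ⟨m + j, by rw [pow_succ, hm, a_mul_a]⟩
  intro t
  cases t with
  | ofNat s =>
    obtain ⟨m, hm⟩ := hnat s
    exact ⟨m, by rw [Int.ofNat_eq_coe, zpow_natCast, hm]⟩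
  | negSucc s =>
    obtain ⟨m, hm⟩ := hnat (s + 1)
    exact ⟨-m, by rw [zpow_negSucc, hm]; rfl⟩

lemma aux_xa_not_mem (i j : ZMod (2*n)) :
    (xa i : QuaternionGroup n) ∉ Subgroup.zpowers (a j) := by
  rw [Subgroup.mem_zpowers_iff]
  rintro ⟨t, ht⟩
  obtain ⟨m, hm⟩ := aux_pow_a j t
  rw [hm] at ht
  exact QuaternionGroup.noConfusion rfl (heq_of_eq ht)

lemma aux_nn : (n : ZMod (2*n)) + (n : ZMod (2*n)) = 0 := by
  rw [← Nat.cast_add, ← two_mul]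
  exact ZMod.natCast_self _

lemma aux_negn : -((n : ZMod (2*n))) = (n : ZMod (2*n)) :=
  neg_eq_of_add_eq_zero_left aux_nn

lemma aux_mem_zpowers_xa_iff {g : QuaternionGroup n} {j : ZMod (2*n)} :
    g ∈ Subgroup.zpowers (xa j) ↔
      g = a 0 ∨ g = a n ∨ g = xa j ∨ g = xa (j + (n : ZMod (2*n))) := by
  have hsub : (j : ZMod (2*n)) - n = j + n := by
    rw [sub_eq_add_neg, aux_negn]
  have h2' : (xa j : QuaternionGroup n) ^ ((2:ℕ):ℤ) = a n := by
    rw [zpow_natCast, xa_sq]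
  have h3' : (xa j : QuaternionGroup n) ^ ((3:ℕ):ℤ) = xa (j + (n : ZMod (2*n))) := by
    rw [zpow_natCast, pow_succ, xa_sq, a_mul_xa, hsub]
  constructor
  · rw [Subgroup.mem_zpowers_iff]
    rintro ⟨t, rfl⟩
    have h4 : (xa j : QuaternionGroup n) ^ (4 : ℤ) = 1 := by
      rw [show (4:ℤ) = ((4:ℕ):ℤ) from rfl, zpow_natCast, xa_pow_four]
    have key : (xa j : QuaternionGroup n) ^ t = (xa j) ^ (t % 4) := by
      conv_lhs => rw [← Int.mul_ediv_add_emod t 4]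
      rw [zpow_add, zpow_mul, h4, one_zpow, one_mul]
    rw [key]
    have h0 : (0:ℤ) ≤ t % 4 := Int.emod_nonneg t (by norm_num)
    have h3 : t % 4 < 4 := Int.emod_lt_of_pos t (by norm_num)
    have hcases : t % 4 = 0 ∨ t % 4 = 1 ∨ t % 4 = ((2:ℕ):ℤ) ∨ t % 4 = ((3:ℕ):ℤ) := by
      push_cast; omega
    rcases hcases with h | h | h | h <;> rw [h]
    · left; rw [zpow_zero]; rfl
    · right; right; left; rw [zpow_one]
    · right; left; exact h2'
    · right; right; right; exact h3'
  · rintro (rfl | rfl | rfl | rfl)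
    · exact ⟨0, rfl⟩
    · exact ⟨((2:ℕ):ℤ), h2'⟩
    · exact ⟨1, zpow_one _⟩
    · exact ⟨((3:ℕ):ℤ), h3'⟩

lemma aux_a_mem_zpowers_a_one [NeZero n] (i : ZMod (2*n)) :
    (a i : QuaternionGroup n) ∈ Subgroup.zpowers (a 1) := by
  haveI : NeZero (2*n) := ⟨by have := NeZero.pos n; omega⟩
  refine Subgroup.mem_zpowers_iff.mpr ⟨(i.val : ℤ), ?_⟩
  rw [zpow_natCast, a_one_pow, ZMod.natCast_zmod_val]

end Aux

theorem quaternion_domination (n : ℕ) (hn : 2 ≤ n) :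
    (properEnhancedPowerGraph (QuaternionGroup n)).dominationNumber = n + 1 := by
  haveI : NeZero n := ⟨by omega⟩
  haveI : NeZero (2*n) := ⟨by omega⟩
  set Q := QuaternionGroup n with hQ
  set E := enhancedPowerGraph Q with hEdef
  -- basic ZMod facts
  have hcast : ∀ x y : ℕ, x < 2*n → y < 2*n →
      (((x:ℕ) : ZMod (2*n)) = ((y:ℕ) : ZMod (2*n)) ↔ x = y) := by
    intro x y hx hy
    constructor
    · intro h
      have := congrArg ZMod.val h
      rwa [ZMod.val_cast_of_lt hx, ZMod.val_cast_of_lt hy] at this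
    · rintro rfl; rfl
  have e1 : ((1:ℕ) : ZMod (2*n)) = 1 := Nat.cast_one
  have e0 : ((0:ℕ) : ZMod (2*n)) = 0 := Nat.cast_zero
  have h10 : (1 : ZMod (2*n)) ≠ 0 := by
    intro h
    have := (hcast 1 0 (by omega) (by omega)).mp (by rw [e1, e0, h])
    omega
  have h1n : (1 : ZMod (2*n)) ≠ (n : ZMod (2*n)) := by
    intro h
    have := (hcast 1 n (by omega) (by omega)).mp (by rw [e1, h])
    omega
  have hn0 : (n : ZMod (2*n)) ≠ 0 := by
    intro h
    have := (hcast n 0 (by omega) (by omega)).mp (by rw [e0, h])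
    omega
  -- adjacency lemmas
  have hadj_aa : ∀ i j : ZMod (2*n), i ≠ j → E.Adj (a i) (a j) := by
    intro i j h
    exact ⟨fun hc => h (QuaternionGroup.a.inj hc), a 1,
      aux_a_mem_zpowers_a_one i, aux_a_mem_zpowers_a_one j⟩
  have hadj_nax : ∀ i j : ZMod (2*n), i ≠ 0 → i ≠ (n : ZMod (2*n)) → ¬ E.Adj (a i) (xa j) := by
    rintro i j hi0 hin ⟨hne, w, hx, hy⟩
    cases w with
    | a t => exact aux_xa_not_mem j t hy
    | xa t =>
      rcases aux_mem_zpowers_xa_iff.mp hx with h | h | h | h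
      · exact hi0 (QuaternionGroup.a.inj h)
      · exact hin (QuaternionGroup.a.inj h)
      · exact QuaternionGroup.noConfusion rfl (heq_of_eq h)
      · exact QuaternionGroup.noConfusion rfl (heq_of_eq h)
  have hadj_xx : ∀ i j : ZMod (2*n), E.Adj (xa i) (xa j) ↔ j = i + n := by
    intro i j
    constructor
    · rintro ⟨hne, w, hx, hy⟩
      cases w with
      | a t => exact absurd hx (aux_xa_not_mem i t)
      | xa t =>
        have hi : i = t ∨ i = t + n := by
          rcases aux_mem_zpowers_xa_iff.mp hx with h | h | h | h
          · exact absurd h (fun h => QuaternionGroup.noConfusion rfl (heq_of_eq h))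
          · exact absurd h (fun h => QuaternionGroup.noConfusion rfl (heq_of_eq h))
          · exact Or.inl (QuaternionGroup.xa.inj h)
          · exact Or.inr (QuaternionGroup.xa.inj h)
        have hj : j = t ∨ j = t + n := by
          rcases aux_mem_zpowers_xa_iff.mp hy with h | h | h | h
          · exact absurd h (fun h => QuaternionGroup.noConfusion rfl (heq_of_eq h))
          · exact absurd h (fun h => QuaternionGroup.noConfusion rfl (heq_of_eq h))
          · exact Or.inl (QuaternionGroup.xa.inj h)
          · exact Or.inr (QuaternionGroup.xa.inj h)
        have hij : i ≠ j := fun h => hne (by rw [h])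
        rcases hi with rfl | rfl <;> rcases hj with rfl | rfl
        · exact absurd rfl hij
        · rfl
        · rw [add_assoc, aux_nn, add_zero]
        · exact absurd rfl hij
    · rintro rfl
      refine ⟨?_, xa i, aux_mem_zpowers_xa_iff.mpr (Or.inr (Or.inr (Or.inl rfl))),
        aux_mem_zpowers_xa_iff.mpr (Or.inr (Or.inr (Or.inr rfl)))⟩
      intro h
      exact hn0 (left_eq_add.mp (QuaternionGroup.xa.inj h))
  -- the set of dominating vertices
  have hdom : E.domVerts = {a 0, a (n : ZMod (2*n))} := by
    ext g
    constructor
    · intro hg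
      by_contra hng
      simp only [Set.mem_insert_iff, Set.mem_singleton_iff, not_or] at hng
      obtain ⟨hg0, hgn⟩ := hng
      cases g with
      | a i =>
        have hi0 : i ≠ 0 := fun h => hg0 (by rw [h])
        have hin : i ≠ (n : ZMod (2*n)) := fun h => hgn (by rw [h])
        exact hadj_nax i 0 hi0 hin (hg (xa 0) (fun h => QuaternionGroup.noConfusion rfl (heq_of_eq h)))
      | xa i =>
        have := hg (a 1) (fun h => QuaternionGroup.noConfusion rfl (heq_of_eq h))
        exact hadj_nax 1 i h10 h1n this.symm
    · rintro (rfl | rfl)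
      · intro u hu
        exact ⟨fun h => hu h.symm, u, Subgroup.one_mem _, Subgroup.mem_zpowers u⟩
      · intro u hu
        cases u with
        | a i =>
          refine hadj_aa _ i ?_
          exact fun h => hu (by rw [← h])
        | xa i =>
          refine ⟨fun h => QuaternionGroup.noConfusion rfl (heq_of_eq h), xa i,
            aux_mem_zpowers_xa_iff.mpr (Or.inr (Or.inl rfl)),
            aux_mem_zpowers_xa_iff.mpr (Or.inr (Or.inr (Or.inl rfl)))⟩
  have hS : ∀ g : Q, g ∈ E.domVertsᶜ ↔ (g ≠ a 0 ∧ g ≠ a (n : ZMod (2*n))) := by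
    intro g
    rw [Set.mem_compl_iff, hdom]
    simp [Set.mem_insert_iff, not_or]
  -- vertices
  have hmem_a1 : (a 1 : Q) ∈ E.domVertsᶜ := by
    rw [hS]
    exact ⟨fun h => h10 (QuaternionGroup.a.inj h), fun h => h1n (QuaternionGroup.a.inj h)⟩
  have hmem_xa : ∀ i : ZMod (2*n), (xa i : Q) ∈ E.domVertsᶜ := by
    intro i
    rw [hS]
    exact ⟨fun h => QuaternionGroup.noConfusion rfl (heq_of_eq h), fun h => QuaternionGroup.noConfusion rfl (heq_of_eq h)⟩
  set V := (E.domVertsᶜ : Set Q)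
  set Γ := properEnhancedPowerGraph Q with hΓ
  have hΓadj : ∀ u v : V, Γ.Adj u v ↔ E.Adj u.1 v.1 := fun u v => Iff.rfl
  set v1 : V := ⟨a 1, hmem_a1⟩ with hv1def
  set g : Fin n → V := fun i => ⟨xa (((i:ℕ)) : ZMod (2*n)), hmem_xa _⟩ with hgdef
  have hginj : Function.Injective g := by
    intro i j h
    have := QuaternionGroup.xa.inj (Subtype.ext_iff.mp h)
    exact Fin.ext ((hcast i j (by omega) (by omega)).mp this)
  -- upper bound : n + 1 is achieved
  have hmemS : (n + 1) ∈ {m : ℕ | ∃ D : Set V, Γ.IsDominatingSet D ∧ D.ncard = m} := by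
    refine ⟨insert v1 (Set.range g), ?_, ?_⟩
    · rintro ⟨(i | i), hvm⟩ hv
      · refine ⟨v1, Set.mem_insert _ _, ?_⟩
        rw [hΓadj]
        refine hadj_aa i 1 ?_
        intro h
        exact hv (by rw [Set.mem_insert_iff]; left; exact Subtype.ext (show (a i : Q) = a 1 by rw [h]))
      · by_cases hlt : i.val < n
        · exfalso
          apply hv
          rw [Set.mem_insert_iff]
          right
          exact ⟨⟨i.val, hlt⟩, Subtype.ext (by simp [hgdef, ZMod.natCast_zmod_val])⟩
        · have hval2 : i.val < 2*n := ZMod.val_lt i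
          refine ⟨g ⟨i.val - n, by omega⟩, Set.mem_insert_of_mem _ ⟨_, rfl⟩, ?_⟩
          rw [hΓadj, hadj_xx]
          show ((i.val - n : ℕ) : ZMod (2*n)) = i + n
          rw [Nat.cast_sub (by omega), ZMod.natCast_zmod_val, sub_eq_add_neg, aux_negn]
    · rw [Set.ncard_insert_of_notMem ?_ (Set.toFinite _)]
      · rw [← Set.image_univ, Set.ncard_image_of_injective _ hginj, Set.ncard_univ,
          Nat.card_eq_fintype_card, Fintype.card_fin]
      · rintro ⟨i, hi⟩
        exact QuaternionGroup.noConfusion rfl (heq_of_eq (Subtype.ext_iff.mp hi))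
  -- lower bound
  have hlb : ∀ m ∈ {m : ℕ | ∃ D : Set V, Γ.IsDominatingSet D ∧ D.ncard = m}, n + 1 ≤ m := by
    rintro m ⟨D, hD, rfl⟩
    -- a rotation in D
    have hrot : ∃ r ∈ D, ∃ jr, r.1 = a jr := by
      by_cases h : v1 ∈ D
      · exact ⟨v1, h, 1, rfl⟩
      · obtain ⟨u, huD, hadj⟩ := hD v1 h
        rw [hΓadj] at hadj
        obtain ⟨(j | j), humem⟩ := u
        · exact ⟨_, huD, j, rfl⟩
        · exact absurd hadj (hadj_nax 1 j h10 h1n)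
    -- for each i < n, an element of D among {xa i, xa (i+n)}
    have hpair : ∀ i : Fin n, ∃ u ∈ D, u.1 = xa (((i:ℕ)) : ZMod (2*n)) ∨
        u.1 = xa ((((i:ℕ)) : ZMod (2*n)) + (n : ZMod (2*n))) := by
      intro i
      set vi : V := ⟨xa (((i:ℕ)) : ZMod (2*n)), hmem_xa _⟩ with hvidef
      by_cases h : vi ∈ D
      · exact ⟨vi, h, Or.inl rfl⟩
      · obtain ⟨u, huD, hadj⟩ := hD vi h
        rw [hΓadj] at hadj
        obtain ⟨(j | j), humem⟩ := u
        · exfalso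
          obtain ⟨hj0, hjn⟩ := (hS _).mp humem
          exact hadj_nax j _ (fun h => hj0 (by rw [h])) (fun h => hjn (by rw [h])) hadj.symm
        · have := (hadj_xx _ _).mp hadj
          exact ⟨_, huD, Or.inr (show (xa j : Q) = _ by rw [this])⟩
    obtain ⟨r, hrD, jr, hr⟩ := hrot
    choose c hcD hcval using hpair
    have hcidx : ∀ i : Fin n, ∃ q : ZMod (2*n), (c i).1 = xa q ∧ q.val % n = (i:ℕ) := by
      intro i
      rcases hcval i with h | h
      · refine ⟨_, h, ?_⟩
        rw [ZMod.val_cast_of_lt (by omega : (i:ℕ) < 2*n)]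
        exact Nat.mod_eq_of_lt i.2
      · refine ⟨_, h, ?_⟩
        have hc2 : ((((i:ℕ)) : ZMod (2*n)) + (n : ZMod (2*n))) = (((i:ℕ) + n : ℕ) : ZMod (2*n)) := by
          push_cast; rfl
        rw [hc2, ZMod.val_cast_of_lt (by omega : (i:ℕ) + n < 2*n), Nat.add_mod_right,
          Nat.mod_eq_of_lt i.2]
    have hcinj : Function.Injective c := by
      intro i j h
      obtain ⟨q, hq, hqi⟩ := hcidx i
      obtain ⟨q', hq', hqj⟩ := hcidx j
      rw [h, hq'] at hq
      have : q' = q := QuaternionGroup.xa.inj hq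
      rw [this] at hqj
      exact Fin.ext (hqi ▸ hqj ▸ rfl)
    have hrnot : r ∉ Set.range c := by
      rintro ⟨i, hi⟩
      obtain ⟨q, hq, -⟩ := hcidx i
      rw [hi, hr] at hq
      exact QuaternionGroup.noConfusion rfl (heq_of_eq hq)
    have hsub : insert r (Set.range c) ⊆ D := by
      rintro x hx
      rcases Set.mem_insert_iff.mp hx with rfl | ⟨i, rfl⟩
      · exact hrD
      · exact hcD i
    calc n + 1 = (insert r (Set.range c)).ncard := by
          rw [Set.ncard_insert_of_notMem hrnot (Set.toFinite _), ← Set.image_univ,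
            Set.ncard_image_of_injective _ hcinj, Set.ncard_univ,
            Nat.card_eq_fintype_card, Fintype.card_fin]
      _ ≤ D.ncard := Set.ncard_le_ncard hsub (Set.toFinite _)
  -- conclude
  exact le_antisymm (Nat.sInf_le hmemS) (le_csInf ⟨_, hmemS⟩ hlb)

/-- For `k ≥ 3`, `γ(G_E**(Q_{2^k})) = 2^{k-2} + 1`. -/
theorem stmt_8 (k : ℕ) (hk : 3 ≤ k) :
    (properEnhancedPowerGraph (QuaternionGroup (2 ^ (k - 2)))).dominationNumber =
      2 ^ (k - 2) + 1 := by
  refine quaternion_domination _ ?_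
  have : 1 ≤ k - 2 := by omega
  calc 2 = 2^1 := rfl
    _ ≤ 2 ^ (k-2) := Nat.pow_le_pow_right (by norm_num) this
end

section
/- Let k ≥ 3 and let n be a positive integer with gcd(n, 2) = 1. Then the domination number of the proper enhanced power graph of G = Z_n × Q_{2^k} satisfies γ(G_E**(Z_n × Q_{2^k})) = 2^{k-2} + 1. -/
open SimpleGraph

section
open Subgroup QuaternionGroup
set_option linter.unusedSectionVars false
namespace Stmt9

variable {m : ℕ} [NeZero m]

theorem a_pow (i : ZMod (2*m)) (t : ℕ) : (a i : QuaternionGroup m) ^ t = a ((t : ZMod (2*m)) * i) := by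
  induction t with
  | zero => rw [pow_zero, Nat.cast_zero, zero_mul, one_def]
  | succ t ih => rw [pow_succ, ih, a_mul_a]; push_cast; ring_nf

theorem mem_zpowers_a {r : QuaternionGroup m} {i : ZMod (2*m)}
    (h : r ∈ zpowers (a i)) : ∃ j, r = a j := by
  rw [← mem_powers_iff_mem_zpowers] at h
  obtain ⟨t, ht⟩ := h
  simp only at ht
  rw [a_pow] at ht
  exact ⟨_, ht.symm⟩

theorem xa_pow_classify {r : QuaternionGroup m} {j : ZMod (2*m)}
    (h : r ∈ zpowers (xa j)) :
    r = 1 ∨ r = a (m : ZMod (2*m)) ∨ r = xa j ∨ r = xa (j - (m : ZMod (2*m))) := by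
  rw [← mem_powers_iff_mem_zpowers] at h
  obtain ⟨t, ht⟩ := h
  simp only at ht
  have h4 : (xa j : QuaternionGroup m) ^ (4 * (t / 4) + t % 4) = r := by
    rw [Nat.div_add_mod]; exact ht
  rw [pow_add, pow_mul, xa_pow_four, one_pow, one_mul] at h4
  have hlt : t % 4 < 4 := Nat.mod_lt _ (by norm_num)
  interval_cases h : t % 4
  · left; exact h4.symm
  · right; right; left; rw [← h4]; simp
  · right; left; rw [← h4]; simp
  · right; right; right; rw [← h4]
    have : (3:ℕ) = 2+1 := rfl
    rw [this, pow_succ, xa_sq, a_mul_xa]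

theorem a_mem_zpowers_a_one (i : ZMod (2*m)) : (a i : QuaternionGroup m) ∈ zpowers (a 1) := by
  rw [← mem_powers_iff_mem_zpowers]
  exact ⟨i.val, by simp only []; rw [a_pow]; simp⟩

theorem am_mem_zpowers_xa (j : ZMod (2*m)) :
    (a (m : ZMod (2*m)) : QuaternionGroup m) ∈ zpowers (xa j) := by
  rw [← mem_powers_iff_mem_zpowers]
  exact ⟨2, by simp⟩

theorem xa_sub_m_mem_zpowers_xa (j : ZMod (2*m)) :
    (xa (j - (m : ZMod (2*m))) : QuaternionGroup m) ∈ zpowers (xa j) := by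
  rw [← mem_powers_iff_mem_zpowers]
  refine ⟨3, ?_⟩
  show xa j ^ 3 = _
  have : (3:ℕ) = 2+1 := rfl
  rw [this, pow_succ, xa_sq, a_mul_xa]

theorem mem_zpowers_prod {A B : Type*} [Group A] [Group B] [Finite A] [Finite B]
    {x e : A} {q s : B} (hc : Nat.Coprime (orderOf e) (orderOf s))
    (hx : x ∈ zpowers e) (hq : q ∈ zpowers s) : (x, q) ∈ zpowers (e, s) := by
  rw [← mem_powers_iff_mem_zpowers] at hx hq ⊢
  obtain ⟨t1, ht1⟩ := hx
  obtain ⟨t2, ht2⟩ := hq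
  simp only at ht1 ht2
  obtain ⟨t, ht⟩ := Nat.chineseRemainder hc t1 t2
  refine ⟨t, ?_⟩
  simp only [Prod.pow_mk, Prod.mk.injEq]
  constructor
  · rw [← ht1, pow_eq_pow_iff_modEq]; exact ht.1
  · rw [← ht2, pow_eq_pow_iff_modEq]; exact ht.2

theorem snd_mem_of_mem_zpowers {A B : Type*} [Group A] [Group B]
    {u : A × B} {w : A × B} (h : u ∈ zpowers w) : u.2 ∈ zpowers w.2 := by
  obtain ⟨t, ht⟩ := Subgroup.mem_zpowers_iff.mp h
  exact Subgroup.mem_zpowers_iff.mpr ⟨t, by rw [← ht]; simp⟩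

-- ZMod facts
section zmodfacts
variable (hm : 2 ≤ m)
include hm

theorem cast_inj_2m {x y : ℕ} (hx : x < 2*m) (hy : y < 2*m) (h : (x : ZMod (2*m)) = y) : x = y := by
  have := congrArg ZMod.val h
  rwa [ZMod.val_cast_of_lt hx, ZMod.val_cast_of_lt hy] at this

theorem m_ne_zero : (m : ZMod (2*m)) ≠ 0 := by
  intro h
  have := cast_inj_2m hm (x := m) (y := 0) (by omega) (by omega) (by push_cast; exact h)
  omega

theorem one_ne_zero' : (1 : ZMod (2*m)) ≠ 0 := by
  intro h
  have := cast_inj_2m hm (x := 1) (y := 0) (by omega) (by omega) (by push_cast; exact h)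
  omega

theorem m_ne_one : (m : ZMod (2*m)) ≠ 1 := by
  intro h
  have := cast_inj_2m hm (x := m) (y := 1) (by omega) (by omega) (by push_cast; rw [h])
  omega

theorem m_add_m : (m : ZMod (2*m)) + m = 0 := by
  have : ((2*m : ℕ) : ZMod (2*m)) = 0 := ZMod.natCast_self _
  push_cast at this
  linear_combination this

theorem sub_m_eq_add_m (j : ZMod (2*m)) : j - (m : ZMod (2*m)) = j + m := by
  have := m_add_m hm
  linear_combination -this

end zmodfacts

section main
variable {n : ℕ} [NeZero n]

theorem cop_orders (hcop : Nat.Coprime n (4*m)) (e : Multiplicative (ZMod n))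
    (s : QuaternionGroup m) : Nat.Coprime (orderOf e) (orderOf s) := by
  have h1 : orderOf e ∣ n := by simpa using orderOf_dvd_natCard e
  have h2 : orderOf s ∣ 4*m := by
    have := orderOf_dvd_natCard s
    rwa [Nat.card_eq_fintype_card, QuaternionGroup.card] at this
  exact Nat.Coprime.coprime_dvd_right h2 (Nat.Coprime.coprime_dvd_left h1 hcop)

theorem adj_iff (hcop : Nat.Coprime n (4*m))
    (u v : Multiplicative (ZMod n) × QuaternionGroup m) :
    (enhancedPowerGraph _).Adj u v ↔
      u ≠ v ∧ ∃ s : QuaternionGroup m, u.2 ∈ zpowers s ∧ v.2 ∈ zpowers s := by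
  constructor
  · rintro ⟨hne, w, hu, hv⟩
    exact ⟨hne, w.2, snd_mem_of_mem_zpowers hu, snd_mem_of_mem_zpowers hv⟩
  · rintro ⟨hne, s, hu, hv⟩
    obtain ⟨e, he⟩ := IsCyclic.exists_generator (α := Multiplicative (ZMod n))
    refine ⟨hne, (e, s), ?_, ?_⟩
    · have := mem_zpowers_prod (cop_orders hcop e s) (he u.1) hu
      simpa using this
    · have := mem_zpowers_prod (cop_orders hcop e s) (he v.1) hv
      simpa using this

theorem domVerts_iff (hm : 2 ≤ m) (hcop : Nat.Coprime n (4*m))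
    (v : Multiplicative (ZMod n) × QuaternionGroup m) :
    v ∈ (enhancedPowerGraph _).domVerts ↔ v.2 = 1 ∨ v.2 = a (m : ZMod (2*m)) := by
  obtain ⟨c, q⟩ := v
  show (∀ u, u ≠ (c, q) → _) ↔ _
  constructor
  · intro h
    cases q with
    | a i =>
      have hadj := h (c, xa 0) (by simp)
      rw [adj_iff hcop] at hadj
      obtain ⟨-, s, hs1, hs2⟩ := hadj
      cases s with
      | a j =>
        obtain ⟨j', hj'⟩ := mem_zpowers_a hs2
        simp at hj'
      | xa j =>
        rcases xa_pow_classify hs1 with h' | h' | h' | h'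
        · exact Or.inl h'
        · exact Or.inr h'
        · simp at h'
        · simp at h'
    | xa i =>
      exfalso
      have hadj := h (c, a 1) (by simp)
      rw [adj_iff hcop] at hadj
      obtain ⟨-, s, hs1, hs2⟩ := hadj
      cases s with
      | a j =>
        obtain ⟨j', hj'⟩ := mem_zpowers_a hs1
        simp at hj'
      | xa j =>
        rcases xa_pow_classify hs2 with h' | h' | h' | h'
        · rw [one_def] at h'
          exact one_ne_zero' hm (by injection h')
        · exact m_ne_one hm (by injection h' with h''; exact h''.symm)
        · simp at h'
        · simp at h'
  · intro h u hne
    rw [adj_iff hcop]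
    refine ⟨hne.symm, ?_⟩
    obtain ⟨d, r⟩ := u
    rcases h with h | h
    · exact ⟨r, by rw [show ((c,q).2) = q from rfl] at h; rw [show ((c,q).2) = q from rfl, h]; exact Subgroup.one_mem _, Subgroup.mem_zpowers _⟩
    · rw [show ((c,q).2) = q from rfl] at h
      cases r with
      | a i =>
        exact ⟨a 1, by rw [show ((c,q).2) = q from rfl, h]; exact a_mem_zpowers_a_one _,
          a_mem_zpowers_a_one _⟩
      | xa i =>
        exact ⟨xa i, by rw [show ((c,q).2) = q from rfl, h]; exact am_mem_zpowers_xa _,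
          Subgroup.mem_zpowers _⟩
end main

section main2
variable {n : ℕ} [NeZero n]

theorem main (hm : 2 ≤ m) (hcop : Nat.Coprime n (4*m)) :
    (properEnhancedPowerGraph (Multiplicative (ZMod n) × QuaternionGroup m)).dominationNumber
      = m + 1 := by
  classical
  set G := Multiplicative (ZMod n) × QuaternionGroup m with hG
  set C : Set G := (enhancedPowerGraph G).domVertsᶜ with hC
  -- membership facts
  have hmemC : ∀ v : G, v ∈ C ↔ ¬(v.2 = 1 ∨ v.2 = a (m : ZMod (2*m))) := by
    intro v
    rw [hC, Set.mem_compl_iff, domVerts_iff hm hcop]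
  have hxa0 : ((m:ZMod (2*m))) ≠ 0 := m_ne_zero hm
  have h10 : (1 : ZMod (2*m)) ≠ 0 := one_ne_zero' hm
  have hm1 : ((m:ZMod (2*m))) ≠ 1 := m_ne_one hm
  have hva : ((1 : Multiplicative (ZMod n)), a (1 : ZMod (2*m))) ∈ C := by
    rw [hmemC]
    push_neg
    constructor
    · rw [one_def]; simpa [-a_zero] using h10
    · simpa using fun h => hm1 h.symm
  have hvx : ∀ j : ZMod (2*m), ((1 : Multiplicative (ZMod n)), xa j) ∈ C := by
    intro j
    rw [hmemC]
    push_neg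
    constructor
    · rw [one_def]; simp [-a_zero]
    · simp
  -- the canonical m+1 vertices
  set F : Option (Fin m) → C := fun t =>
    match t with
    | none => ⟨((1 : Multiplicative (ZMod n)), a (1 : ZMod (2*m))), hva⟩
    | some j => ⟨((1 : Multiplicative (ZMod n)), xa ((j : ℕ) : ZMod (2*m))), hvx _⟩
    with hF
  have castlt : ∀ j : Fin m, ((j:ℕ) : ZMod (2*m)).val = (j:ℕ) := fun j =>
    ZMod.val_cast_of_lt (by omega)
  have hFinj : Function.Injective F := by
    rintro (_ | j) (_ | j') h <;> simp only [hF, Subtype.mk.injEq] at h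
    · rfl
    all_goals have h2 := congrArg Prod.snd h
    · simp at h2
    · simp at h2
    · have h3 : ((j:ℕ) : ZMod (2*m)) = ((j':ℕ) : ZMod (2*m)) := by injection h2
      have := cast_inj_2m hm (by omega) (by omega) h3
      congr 1
      exact Fin.ext this
  have hcard : (Set.range F).ncard = m + 1 := by
    rw [← Set.image_univ, Set.ncard_image_of_injective _ hFinj, Set.ncard_univ,
      Nat.card_eq_fintype_card, Fintype.card_option, Fintype.card_fin]
  -- adjacency in the induced graph
  have hadj : ∀ u v : C, (properEnhancedPowerGraph G).Adj u v ↔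
      (u : G) ≠ v ∧ ∃ s : QuaternionGroup m, (u : G).2 ∈ zpowers s ∧ (v : G).2 ∈ zpowers s := by
    intro u v
    constructor
    · intro h
      exact (adj_iff hcop _ _).mp h
    · intro h
      exact (adj_iff hcop (u : G) (v : G)).mpr h
  -- upper bound: range F is dominating
  have hdom : (properEnhancedPowerGraph G).IsDominatingSet (Set.range F) := by
    rintro ⟨⟨c, q⟩, hq'⟩ hv
    have hq := (hmemC (c, q)).mp hq'
    push_neg at hq
    cases q with
    | a i =>
      refine ⟨F none, ⟨none, rfl⟩, ?_⟩
      rw [hadj]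
      refine ⟨?_, a 1, a_mem_zpowers_a_one _, a_mem_zpowers_a_one _⟩
      intro h
      exact hv ⟨none, (Subtype.ext h).symm⟩
    | xa i =>
      by_cases hi : i.val < m
      · refine ⟨F (some ⟨i.val, hi⟩), ⟨some ⟨i.val, hi⟩, rfl⟩, ?_⟩
        rw [hadj]
        have hcast : ((i.val : ℕ) : ZMod (2*m)) = i := ZMod.natCast_zmod_val i
        refine ⟨?_, xa i, Subgroup.mem_zpowers _, ?_⟩
        · intro h
          exact hv ⟨some ⟨i.val, hi⟩, (Subtype.ext h).symm⟩
        · show (xa ((i.val : ℕ) : ZMod (2*m)) : QuaternionGroup m) ∈ zpowers (xa i)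
          rw [hcast]
          exact Subgroup.mem_zpowers _
      · have him : i.val < 2*m := ZMod.val_lt i
        refine ⟨F (some ⟨i.val - m, by omega⟩), ⟨some ⟨i.val - m, by omega⟩, rfl⟩, ?_⟩
        rw [hadj]
        have hcast : ((i.val - m : ℕ) : ZMod (2*m)) = i - m := by
          push_cast [Nat.cast_sub (by omega : m ≤ i.val)]
          rw [ZMod.natCast_zmod_val i]
        refine ⟨?_, xa (i - (m : ZMod (2*m))), ?_, ?_⟩
        · intro h
          have h2 := congrArg Prod.snd h
          have h2' : (xa i : QuaternionGroup m) = xa ((i.val - m : ℕ) : ZMod (2*m)) := h2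
          have h3 : i = ((i.val - m : ℕ) : ZMod (2*m)) := by injection h2'
          rw [hcast] at h3
          exact hxa0 (by linear_combination h3)
        · have base := xa_sub_m_mem_zpowers_xa (m := m) (i - (m : ZMod (2*m)))
          have hii : i - (m : ZMod (2*m)) - m = i := by linear_combination -(m_add_m hm)
          rwa [hii] at base
        · show (xa ((i.val - m : ℕ) : ZMod (2*m)) : QuaternionGroup m)
            ∈ zpowers (xa (i - (m : ZMod (2*m))))
          rw [hcast]
          exact Subgroup.mem_zpowers _
  -- lower bound
  have hlow : ∀ N ∈ {N : ℕ | ∃ D : Set C,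
      (properEnhancedPowerGraph G).IsDominatingSet D ∧ D.ncard = N}, m + 1 ≤ N := by
    rintro N ⟨D, hD, rfl⟩
    have hsel : ∀ t : Option (Fin m), ∃ w : C, w ∈ D ∧
        (w = F t ∨ (properEnhancedPowerGraph G).Adj (F t) w) := by
      intro t
      by_cases h : F t ∈ D
      · exact ⟨F t, h, Or.inl rfl⟩
      · obtain ⟨u, hu, hadj'⟩ := hD (F t) h
        exact ⟨u, hu, Or.inr hadj'⟩
    choose g hgD hgP using hsel
    have class_none : ∃ i, (↑(g none) : G).2 = a i := by
      rcases hgP none with h | h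
      · exact ⟨1, by rw [h]⟩
      · rw [hadj] at h
        obtain ⟨-, s, hs1, hs2⟩ := h
        have hs1' : (a (1 : ZMod (2*m)) : QuaternionGroup m) ∈ zpowers s := hs1
        cases s with
        | a j => exact mem_zpowers_a hs2
        | xa j =>
          rcases xa_pow_classify hs1' with h' | h' | h' | h'
          · rw [one_def] at h'
            exact absurd (a.inj h') h10
          · exact absurd (a.inj h').symm hm1
          · simp at h'
          · simp at h'
    have class_some : ∀ j : Fin m, (↑(g (some j)) : G).2 = xa ((j:ℕ) : ZMod (2*m)) ∨
        (↑(g (some j)) : G).2 = xa (((j:ℕ) : ZMod (2*m)) - (m : ZMod (2*m))) := by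
      intro j
      rcases hgP (some j) with h | h
      · left; rw [h]
      · rw [hadj] at h
        obtain ⟨-, s, hs1, hs2⟩ := h
        have hs1' : (xa ((j:ℕ) : ZMod (2*m)) : QuaternionGroup m) ∈ zpowers s := hs1
        have hw := (hmemC ↑(g (some j))).mp (g (some j)).2
        push_neg at hw
        cases s with
        | a l =>
          obtain ⟨l', hl'⟩ := mem_zpowers_a hs1'
          simp at hl'
        | xa l =>
          have hj : ((j:ℕ) : ZMod (2*m)) = l ∨ ((j:ℕ) : ZMod (2*m)) = l - (m : ZMod (2*m)) := by
            rcases xa_pow_classify hs1' with h' | h' | h' | h'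
            · rw [one_def] at h'; simp [-a_zero] at h'
            · simp at h'
            · exact Or.inl (xa.inj h')
            · exact Or.inr (xa.inj h')
          rcases xa_pow_classify hs2 with h' | h' | h' | h'
          · exact absurd h' hw.1
          · exact absurd h' hw.2
          · rcases hj with hj | hj
            · left; rw [h', hj]
            · right; rw [h']
              congr 1
              linear_combination -hj + m_add_m hm
          · rcases hj with hj | hj
            · right; rw [h', hj]
            · left; rw [h']
              congr 1
              linear_combination -hj
    have key : ∀ j j' : Fin m, ∀ e : ZMod (2*m),
        (e = ((j:ℕ) : ZMod (2*m)) ∨ e = ((j:ℕ) : ZMod (2*m)) - (m : ZMod (2*m))) →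
        (e = ((j':ℕ) : ZMod (2*m)) ∨ e = ((j':ℕ) : ZMod (2*m)) - (m : ZMod (2*m))) → j = j' := by
      intro j j' e h1 h2
      have hsub : ∀ jj : Fin m, ((jj:ℕ) : ZMod (2*m)) - m = (((jj:ℕ) + m : ℕ) : ZMod (2*m)) := by
        intro jj
        push_cast
        linear_combination -(m_add_m hm)
      have hj := j.2
      have hj' := j'.2
      apply Fin.ext
      rcases h1 with h1 | h1 <;> rcases h2 with h2 | h2
      · exact cast_inj_2m hm (by omega) (by omega) (h1.symm.trans h2)
      · rw [hsub] at h2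
        have := cast_inj_2m hm (x := (j:ℕ)) (y := (j':ℕ) + m) (by omega) (by omega)
          (h1.symm.trans h2)
        omega
      · rw [hsub] at h1
        have := cast_inj_2m hm (x := (j:ℕ) + m) (y := (j':ℕ)) (by omega) (by omega)
          (h1.symm.trans h2)
        omega
      · rw [hsub] at h1 h2
        have := cast_inj_2m hm (x := (j:ℕ) + m) (y := (j':ℕ) + m) (by omega) (by omega)
          (h1.symm.trans h2)
        omega
    have hginj : Function.Injective g := by
      intro t t' h
      match t, t', h with
      | none, none, h => rfl
      | none, some j, h =>
        exfalso
        have hh := congrArg (Prod.snd ∘ Subtype.val) h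
        simp only [Function.comp_apply] at hh
        obtain ⟨i, hi⟩ := class_none
        rcases class_some j with hx | hx <;> rw [hi, hx] at hh <;> simp at hh
      | some j, none, h =>
        exfalso
        have hh := congrArg (Prod.snd ∘ Subtype.val) h
        simp only [Function.comp_apply] at hh
        obtain ⟨i, hi⟩ := class_none
        rcases class_some j with hx | hx <;> rw [hi, hx] at hh <;> simp at hh
      | some j, some j', h =>
        have hh := congrArg (Prod.snd ∘ Subtype.val) h
        simp only [Function.comp_apply] at hh
        have hjj : j = j' := by
          rcases class_some j with h1 | h1 <;> rcases class_some j' with h2 | h2 <;>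
            rw [h1, h2] at hh
          · exact key j j' _ (Or.inl rfl) (Or.inl (xa.inj hh))
          · exact key j j' _ (Or.inl rfl) (Or.inr (xa.inj hh))
          · exact key j j' _ (Or.inr rfl) (Or.inl (xa.inj hh))
          · exact key j j' _ (Or.inr rfl) (Or.inr (xa.inj hh))
        rw [hjj]
    calc m + 1 = (Set.range g).ncard := by
          rw [← Set.image_univ, Set.ncard_image_of_injective _ hginj, Set.ncard_univ,
            Nat.card_eq_fintype_card, Fintype.card_option, Fintype.card_fin]
      _ ≤ D.ncard := Set.ncard_le_ncard (Set.range_subset_iff.mpr hgD) (Set.toFinite D)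
  apply le_antisymm
  · exact Nat.sInf_le ⟨Set.range F, hdom, hcard⟩
  · exact le_csInf ⟨m + 1, Set.range F, hdom, hcard⟩ hlow

end main2

end Stmt9
end

/-- For `k ≥ 3` and `n` with `gcd(n, 2) = 1`,
`γ(G_E**(ℤ_n × Q_{2^k})) = 2^{k-2} + 1`. -/
theorem stmt_9 (k : ℕ) (hk : 3 ≤ k) (n : ℕ) [NeZero n] (hn : Nat.Coprime n 2) :
    (properEnhancedPowerGraph
        (Multiplicative (ZMod n) × QuaternionGroup (2 ^ (k - 2)))).dominationNumber =
      2 ^ (k - 2) + 1 := by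
  haveI : NeZero (2 ^ (k - 2)) := ⟨(pow_pos (by norm_num : (0:ℕ) < 2) _).ne'⟩
  apply Stmt9.main
  · calc (2:ℕ) = 2 ^ 1 := (pow_one 2).symm
      _ ≤ 2 ^ (k - 2) := Nat.pow_le_pow_right (by norm_num) (by omega)
  · have h4 : 4 * 2 ^ (k - 2) = 2 ^ k := by
      rw [show (4:ℕ) = 2 ^ 2 from rfl, ← pow_add]
      congr 1
      omega
    rw [h4]
    exact hn.pow_right k
end

section
/- Let G = P_1 × ⋯ × P_m (m ≥ 1) be a finite nilpotent group whose Sylow subgroups P_i are p_i-groups that are neither cyclic nor generalized quaternion, and for each i let r_i be the number of distinct subgroups of P_i of order p_i. Then every total dominating set of the proper enhanced power graph G_E**(G) has at least (min_{1 ≤ i ≤ m} r_i) + 1 elements, i.e., γ^strong(G_E**(G)) ≥ (min_{1 ≤ i ≤ m} r_i) + 1. -/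
open SimpleGraph

section AuxLemmas

variable {H : Type*} [Group H] [Finite H] {p : ℕ}

lemma aux_orderOf_pow_div (hp : p.Prime) {x : H} (hx : x ≠ 1)
    (hord : ∃ k, orderOf x = p ^ k) : orderOf (x ^ (orderOf x / p)) = p := by
  obtain ⟨k, hk⟩ := hord
  have hx1 : orderOf x ≠ 1 := by simpa [orderOf_eq_one_iff] using hx
  have hk0 : k ≠ 0 := by rintro rfl; simp at hk; exact hx hk
  have hpx : p ∣ orderOf x := hk ▸ dvd_pow_self p hk0
  have hne : orderOf x ≠ 0 := (orderOf_pos x).ne'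
  rw [orderOf_pow x, Nat.gcd_eq_right (Nat.div_dvd_of_dvd hpx), Nat.div_div_self hpx hne]

lemma aux_socle_eq (hp : p.Prime) {w x : H} (hw : ∃ k, orderOf w = p ^ k)
    (hxw : x ∈ Subgroup.zpowers w) (hx : x ≠ 1) :
    Subgroup.zpowers (x ^ (orderOf x / p)) = Subgroup.zpowers (w ^ (orderOf w / p)) := by
  have hw1 : w ≠ 1 := by
    rintro rfl
    rw [Subgroup.zpowers_one_eq_bot, Subgroup.mem_bot] at hxw
    exact hx hxw
  obtain ⟨k, hk⟩ := hw
  obtain ⟨j, hjk, hj⟩ := (Nat.dvd_prime_pow hp).mp (hk ▸ orderOf_dvd_of_mem_zpowers hxw)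
  have hx_ord := aux_orderOf_pow_div hp hx ⟨j, hj⟩
  have hw_ord := aux_orderOf_pow_div hp hw1 ⟨k, hk⟩
  have hx1 : orderOf x ≠ 1 := by simpa [orderOf_eq_one_iff] using hx
  have hj0 : j ≠ 0 := by rintro rfl; simp at hj; exact hx hj
  have hpox : p ∣ orderOf x := hj ▸ dvd_pow_self p hj0
  obtain ⟨a, ha0⟩ := mem_powers_iff_mem_zpowers.mpr hxw
  have ha : w ^ a = x := ha0
  have hxo : orderOf x = orderOf w / Nat.gcd (orderOf w) a := by rw [← ha, orderOf_pow w]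
  have hdn : Nat.gcd (orderOf w) a ∣ orderOf w := Nat.gcd_dvd_left _ _
  obtain ⟨t, ht⟩ := Nat.gcd_dvd_right (orderOf w) a
  have h1 : Nat.gcd (orderOf w) a * (orderOf x / p) = orderOf w / p := by
    rw [← Nat.mul_div_assoc _ hpox, hxo, Nat.mul_div_cancel' hdn]
  have hmem : x ^ (orderOf x / p) ∈ Subgroup.zpowers (w ^ (orderOf w / p)) := by
    have heq : a * (orderOf x / p) = orderOf w / p * t := by
      rw [ht, mul_right_comm, h1]
    have hxe : x ^ (orderOf x / p) = (w ^ (orderOf w / p)) ^ t := by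
      rw [← pow_mul, ← heq, pow_mul, ha]
    rw [hxe]
    exact pow_mem (Subgroup.mem_zpowers _) t
  apply Subgroup.eq_of_le_of_card_ge (Subgroup.zpowers_le.mpr hmem)
  rw [Nat.card_zpowers, Nat.card_zpowers, hx_ord, hw_ord]

lemma aux_gen (hp : p.Prime) {K : Subgroup H} (hK : Nat.card K = p) :
    ∃ x : H, x ≠ 1 ∧ orderOf x = p ∧ Subgroup.zpowers x = K := by
  have : Nontrivial K := (Finite.one_lt_card_iff_nontrivial).mp (hK ▸ hp.one_lt)
  obtain ⟨y, hy⟩ := exists_ne (1 : K)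
  have hy1 : (y : H) ≠ 1 := fun h => hy (Subtype.ext h)
  have hyo : orderOf (y : H) = p := by
    have hdvd : orderOf (y : H) ∣ p := by
      rw [Subgroup.orderOf_coe]
      exact hK ▸ orderOf_dvd_natCard y
    rcases (Nat.dvd_prime hp).mp hdvd with h | h
    · exact absurd (orderOf_eq_one_iff.mp h) hy1
    · exact h
  refine ⟨y, hy1, hyo, ?_⟩
  apply Subgroup.eq_of_le_of_card_ge (Subgroup.zpowers_le.mpr y.2)
  rw [Nat.card_zpowers, hK, hyo]

lemma aux_noncyclic {Q : Type*} [Group Q] [Finite Q] (h : ¬ IsCyclic Q) :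
    ∃ a b : Q, ∀ c : Q, ¬ (a ∈ Subgroup.zpowers c ∧ b ∈ Subgroup.zpowers c) := by
  by_contra h'
  push_neg at h'
  cases nonempty_fintype Q
  obtain ⟨a, -, hmax⟩ := Finset.exists_max_image (Finset.univ : Finset Q) orderOf ⟨1, Finset.mem_univ 1⟩
  refine h ⟨⟨a, fun b => ?_⟩⟩
  obtain ⟨c, hac, hbc⟩ := h' a b
  have h1 : Subgroup.zpowers a = Subgroup.zpowers c := by
    apply Subgroup.eq_of_le_of_card_ge (Subgroup.zpowers_le.mpr hac)
    rw [Nat.card_zpowers, Nat.card_zpowers]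
    exact hmax c (Finset.mem_univ c)
  show b ∈ Subgroup.zpowers a
  rw [h1]
  exact hbc

end AuxLemmas

section PiAux

variable {m : ℕ} {P : Fin m → Type*} [∀ i, Group (P i)]

lemma aux_comp {c g : ∀ i, P i} (h : g ∈ Subgroup.zpowers c) (i : Fin m) :
    g i ∈ Subgroup.zpowers (c i) := by
  obtain ⟨k, hk⟩ := Subgroup.mem_zpowers_iff.mp h
  exact Subgroup.mem_zpowers_iff.mpr ⟨k, by rw [← hk]; rfl⟩

lemma aux_nondom (g : ∀ i, P i) (i : Fin m) (b : P i) (hb : b ≠ g i)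
    (hnc : ∀ c : P i, ¬ (g i ∈ Subgroup.zpowers c ∧ b ∈ Subgroup.zpowers c)) :
    g ∈ ((enhancedPowerGraph (∀ i, P i)).domVertsᶜ : Set (∀ i, P i)) := by
  intro hdom
  have hu : Function.update g i b ≠ g := by
    intro h
    apply hb
    have h2 := congrFun h i
    rwa [Function.update_self] at h2
  obtain ⟨-, c, h1, h2⟩ := hdom (Function.update g i b) hu
  refine hnc (c i) ⟨aux_comp h1 i, ?_⟩
  have h3 := aux_comp h2 i
  rwa [Function.update_self] at h3

end PiAux

/-- For `G = P₁ × ⋯ × P_m` (`m ≥ 1`) a finite nilpotent group whose Sylow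
subgroups are `pᵢ`-groups, neither cyclic nor generalized quaternion, every total dominating
set of `G_E**(G)` has at least `(min_i rᵢ) + 1` elements. -/
theorem stmt_14 (m : ℕ) (hm : 1 ≤ m) (p : Fin m → ℕ) (hp : ∀ i, (p i).Prime)
    (hinj : Function.Injective p)
    (P : Fin m → Type*) [∀ i, Group (P i)] [∀ i, Fintype (P i)]
    (hPp : ∀ i, IsPGroup (p i) (P i))
    (hc : ∀ i, ¬ IsCyclic (P i)) (hq : ∀ i, ¬ IsGeneralizedQuaternion (P i)) :
    ∀ D : Set ((enhancedPowerGraph (∀ i, P i)).domVertsᶜ : Set (∀ i, P i)),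
      (properEnhancedPowerGraph (∀ i, P i)).IsTotalDominatingSet D →
        (⨅ i, numSubgroupsOfOrder (P i) (p i)) + 1 ≤ D.ncard := by
  intro D hDom
  by_contra hlt
  push_neg at hlt
  have hDr : D.ncard ≤ ⨅ i, numSubgroupsOfOrder (P i) (p i) := by omega
  have hord : ∀ (i : Fin m) (g : P i), ∃ k, orderOf g = (p i) ^ k := by
    intro i g
    obtain ⟨k, hk⟩ := hPp i g
    obtain ⟨j, -, hj⟩ := (Nat.dvd_prime_pow (hp i)).mp (orderOf_dvd_of_pow_eq_one hk)
    exact ⟨j, hj⟩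
  have hr_le : ∀ i, (⨅ i, numSubgroupsOfOrder (P i) (p i)) ≤ numSubgroupsOfOrder (P i) (p i) :=
    fun i => ciInf_le (OrderBot.bddBelow _) i
  have hone : (1 : ∀ i, P i) ∈ (enhancedPowerGraph (∀ i, P i)).domVerts :=
    fun u hu => ⟨hu.symm, u, one_mem _, Subgroup.mem_zpowers u⟩
  have hvne : ∀ v : ((enhancedPowerGraph (∀ i, P i)).domVertsᶜ : Set (∀ i, P i)),
      (v : ∀ i, P i) ≠ 1 := by
    intro v h
    exact v.2 (by rw [h]; exact hone)
  have i₀ : Fin m := ⟨0, hm⟩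
  -- a vertex exists
  obtain ⟨a, b, hab⟩ := aux_noncyclic (hc i₀)
  have hba : b ≠ a := fun h => hab a ⟨Subgroup.mem_zpowers a, h ▸ Subgroup.mem_zpowers a⟩
  have hg₀ : Function.update (1 : ∀ i, P i) i₀ a ∈
      ((enhancedPowerGraph (∀ i, P i)).domVertsᶜ : Set (∀ i, P i)) := by
    refine aux_nondom _ i₀ b ?_ ?_
    · rwa [Function.update_self]
    · rw [Function.update_self]; exact hab
  have hDfin : D.Finite := Set.toFinite D
  -- D has at least two elements
  have hD2 : 2 ≤ D.ncard := by
    obtain ⟨u, huD, -⟩ := hDom ⟨_, hg₀⟩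
    obtain ⟨v, hvD, hadj⟩ := hDom u
    have hne : (u : ∀ i, P i) ≠ (v : ∀ i, P i) ∧ ∃ w, (u : ∀ i, P i) ∈ Subgroup.zpowers w ∧
        (v : ∀ i, P i) ∈ Subgroup.zpowers w := hadj
    have huv : u ≠ v := fun h => hne.1 (congrArg _ h)
    calc 2 = ({u, v} : Set _).ncard := (Set.ncard_pair huv).symm
      _ ≤ D.ncard := Set.ncard_le_ncard
          (Set.insert_subset_iff.mpr ⟨huD, Set.singleton_subset_iff.mpr hvD⟩) hDfin
  have hr2 : 2 ≤ ⨅ i, numSubgroupsOfOrder (P i) (p i) := le_trans hD2 hDr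
  -- key adjacency consequence
  have hkey : ∀ (i : Fin m) (c x y : ∀ j, P j), x ∈ Subgroup.zpowers c →
      y ∈ Subgroup.zpowers c → x i ≠ 1 → y i ≠ 1 →
      Subgroup.zpowers (x i ^ (orderOf (x i) / p i)) =
        Subgroup.zpowers (y i ^ (orderOf (y i) / p i)) :=
    fun i c x y hx hy hxi hyi =>
      (aux_socle_eq (hp i) (hord i (c i)) (aux_comp hx i) hxi).trans
        (aux_socle_eq (hp i) (hord i (c i)) (aux_comp hy i) hyi).symm
  by_cases hB : ∀ i : Fin m, ∃ K : Subgroup (P i), Nat.card K = p i ∧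
      ∀ u : ((enhancedPowerGraph (∀ j, P j)).domVertsᶜ : Set (∀ j, P j)), u ∈ D →
        (u : ∀ j, P j) i ≠ 1 →
        Subgroup.zpowers ((u : ∀ j, P j) i ^ (orderOf ((u : ∀ j, P j) i) / p i)) ≠ K
  · -- generic case: build an undominated vertex z
    choose K hK hKD using hB
    choose z hz1 hzord hzK using fun i => aux_gen (hp i) (hK i)
    have hsoc : ∀ i, Subgroup.zpowers (z i ^ (orderOf (z i) / p i)) = K i := by
      intro i
      rw [hzord i, Nat.div_self (hp i).pos, pow_one, hzK i]
    have hri2 : 2 ≤ numSubgroupsOfOrder (P i₀) (p i₀) := le_trans hr2 (hr_le i₀)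
    have hnt : Nontrivial {H : Subgroup (P i₀) // Nat.card H = p i₀} :=
      Finite.one_lt_card_iff_nontrivial.mp (lt_of_lt_of_le one_lt_two hri2)
    obtain ⟨K', hK'⟩ := exists_ne (⟨K i₀, hK i₀⟩ : {H : Subgroup (P i₀) // Nat.card H = p i₀})
    obtain ⟨b', hb1, hbord, hbK⟩ := aux_gen (hp i₀) K'.2
    have hbz : b' ≠ z i₀ := by
      intro h
      exact hK' (Subtype.ext (by rw [← hbK, h, hzK i₀]))
    have hnc : ∀ c : P i₀, ¬ (z i₀ ∈ Subgroup.zpowers c ∧ b' ∈ Subgroup.zpowers c) := by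
      rintro c ⟨h1, h2⟩
      apply hK'
      apply Subtype.ext
      have e1 := aux_socle_eq (hp i₀) (hord i₀ c) h1 (hz1 i₀)
      have e2 := aux_socle_eq (hp i₀) (hord i₀ c) h2 hb1
      have e3 := e2.trans e1.symm
      rw [hsoc i₀, hbord, Nat.div_self (hp i₀).pos, pow_one, hbK] at e3
      exact e3
    have hzV : z ∈ ((enhancedPowerGraph (∀ j, P j)).domVertsᶜ : Set (∀ j, P j)) :=
      aux_nondom z i₀ b' hbz hnc
    obtain ⟨u, huD, hadj⟩ := hDom ⟨z, hzV⟩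
    have hadj' : z ≠ (u : ∀ j, P j) ∧ ∃ c, z ∈ Subgroup.zpowers c ∧
        (u : ∀ j, P j) ∈ Subgroup.zpowers c := hadj
    obtain ⟨-, c, hzc, huc⟩ := hadj'
    obtain ⟨j, hj⟩ := Function.ne_iff.mp (hvne u)
    apply hKD j u huD hj
    have h5 := hkey j c z (u : ∀ j, P j) hzc huc (hz1 j) hj
    rw [← h5, hsoc j]
  · -- counting case
    push_neg at hB
    obtain ⟨i, hi⟩ := hB
    let φ : ((enhancedPowerGraph (∀ j, P j)).domVertsᶜ : Set (∀ j, P j)) → Subgroup (P i) :=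
      fun u => Subgroup.zpowers ((u : ∀ j, P j) i ^ (orderOf ((u : ∀ j, P j) i) / p i))
    let S : Set (Subgroup (P i)) := {K | Nat.card K = p i}
    have hScard : S.ncard = numSubgroupsOfOrder (P i) (p i) := by
      rw [← Nat.card_coe_set_eq]
      rfl
    let D' := {u ∈ D | (u : ∀ j, P j) i ≠ 1}
    have hD'fin : D'.Finite := hDfin.subset (fun x hx => hx.1)
    have hSsub : S ⊆ φ '' D' := by
      intro L hL
      obtain ⟨u, hu1, hu2, hu3⟩ := hi L hL
      exact ⟨u, ⟨hu1, hu2⟩, hu3⟩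
    have h1 : S.ncard ≤ (φ '' D').ncard := Set.ncard_le_ncard hSsub (hD'fin.image φ)
    have h2 : (φ '' D').ncard ≤ D'.ncard := Set.ncard_image_le hD'fin
    have h3 : D'.ncard ≤ D.ncard := Set.ncard_le_ncard (fun x hx => hx.1) hDfin
    have h4 : D.ncard ≤ S.ncard := by
      rw [hScard]
      exact hDr.trans (hr_le i)
    have hD'D : D' = D := Set.eq_of_subset_of_ncard_le (fun x hx => hx.1) (by omega) hDfin
    obtain ⟨L₀, hL₀⟩ : S.Nonempty := Set.nonempty_of_ncard_ne_zero (by omega)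
    obtain ⟨u₁, hu₁D, -, -⟩ := hi L₀ hL₀
    obtain ⟨v, hvD, hadj⟩ := hDom u₁
    have hadj' : (u₁ : ∀ j, P j) ≠ (v : ∀ j, P j) ∧ ∃ c, (u₁ : ∀ j, P j) ∈ Subgroup.zpowers c ∧
        (v : ∀ j, P j) ∈ Subgroup.zpowers c := hadj
    obtain ⟨hne, c, h1c, h2c⟩ := hadj'
    have hvu : v ≠ u₁ := fun h => hne (congrArg _ h.symm)
    have hu₁i : (u₁ : ∀ j, P j) i ≠ 1 := by
      have h6 := hu₁D
      rw [← hD'D] at h6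
      exact h6.2
    have hvi : (v : ∀ j, P j) i ≠ 1 := by
      have h6 := hvD
      rw [← hD'D] at h6
      exact h6.2
    have hφuv : φ u₁ = φ v := hkey i c _ _ h1c h2c hu₁i hvi
    have hSsub2 : S ⊆ φ '' (D \ {u₁}) := by
      intro L hL
      obtain ⟨w, hw1, hw2, hw3⟩ := hi L hL
      by_cases hwu : w = u₁
      · refine ⟨v, ⟨hvD, hvu⟩, ?_⟩
        rw [← hφuv, ← hwu]
        exact hw3
      · exact ⟨w, ⟨hw1, hwu⟩, hw3⟩
    have h5 : S.ncard ≤ (D \ {u₁}).ncard :=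
      le_trans (Set.ncard_le_ncard hSsub2 ((hDfin.subset Set.diff_subset).image φ))
        (Set.ncard_image_le (hDfin.subset Set.diff_subset))
    rw [Set.ncard_diff_singleton_of_mem hu₁D] at h5
    omega
end

section
/- For k ≥ 3, the number of connected components of the proper enhanced power graph G_E**(Q_{2^k}) of the generalized quaternion group Q_{2^k} is 2^{k-2} + 1. -/
open SimpleGraph

namespace QGaux
open QuaternionGroup

variable {n : ℕ}

lemma a_pow (j : ZMod (2*n)) (m : ℕ) :
    (a j : QuaternionGroup n) ^ m = a ((m : ZMod (2*n)) * j) := by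
  induction m with
  | zero => rw [pow_zero, Nat.cast_zero, zero_mul, QuaternionGroup.one_def]
  | succ m ih => rw [pow_succ, ih, a_mul_a]; push_cast; ring_nf

lemma mem_zpowers_a [NeZero n] {x : QuaternionGroup n} {j : ZMod (2*n)}
    (h : x ∈ Subgroup.zpowers (a j)) : ∃ t, x = a t := by
  rw [← mem_powers_iff_mem_zpowers] at h
  obtain ⟨m, rfl⟩ := h
  exact ⟨(m : ZMod (2*n)) * j, a_pow j m⟩

lemma xa_pow_three (j : ZMod (2*n)) :
    (xa j : QuaternionGroup n) ^ 3 = xa (j - (n : ZMod (2*n))) := by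
  rw [show (3:ℕ) = 2 + 1 from rfl, pow_succ, xa_sq, a_mul_xa]

lemma mem_zpowers_xa [NeZero n] {x : QuaternionGroup n} {j : ZMod (2*n)}
    (h : x ∈ Subgroup.zpowers (xa j)) :
    x = 1 ∨ x = a n ∨ x = xa j ∨ x = xa (j - (n : ZMod (2*n))) := by
  rw [← mem_powers_iff_mem_zpowers] at h
  obtain ⟨m, rfl⟩ := h
  simp only []
  rw [← pow_mod_orderOf, orderOf_xa]
  have : m % 4 < 4 := Nat.mod_lt _ (by norm_num)
  interval_cases h : m % 4
  · left; simp
  · right; right; left; simp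
  · right; left; simp
  · right; right; right; exact xa_pow_three j

lemma exists_mul_eq_n (hn : ∃ s, n = 2 ^ s) [NeZero n] {j : ZMod (2*n)} (hj : j ≠ 0) :
    ∃ m : ℕ, (m : ZMod (2*n)) * j = (n : ZMod (2*n)) := by
  obtain ⟨s, hs⟩ := hn
  haveI : NeZero (2*n) := ⟨by have := NeZero.pos n; omega⟩
  set J := j.val with hJ
  have hJ0 : J ≠ 0 := fun h => hj (by rwa [← ZMod.val_eq_zero])
  have hJlt : J < 2*n := ZMod.val_lt j
  set g := Nat.gcd J (2*n) with hg
  have hgdvd2n : g ∣ 2*n := Nat.gcd_dvd_right _ _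
  have hgJ : g ∣ J := Nat.gcd_dvd_left _ _
  have hgpos : 0 < g := Nat.gcd_pos_of_pos_left _ (Nat.pos_of_ne_zero hJ0)
  have h2n : 2*n = 2^(s+1) := by rw [hs, pow_succ]; ring
  obtain ⟨t, ht, hgt⟩ := (Nat.dvd_prime_pow Nat.prime_two).1 (h2n ▸ hgdvd2n)
  have hglt : g < 2*n := lt_of_le_of_lt (Nat.le_of_dvd (Nat.pos_of_ne_zero hJ0) hgJ) hJlt
  have hts : t ≤ s := by
    by_contra hc
    have : t = s + 1 := le_antisymm ht (not_le.1 hc)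
    rw [this, ← h2n] at hgt
    omega
  have hgn : g ∣ n := hgt ▸ hs ▸ pow_dvd_pow 2 hts
  set u := J / g with hu
  have hJu : J = g * u := (Nat.mul_div_cancel' hgJ).symm
  have hcop : Nat.Coprime u ((2*n)/g) := Nat.coprime_div_gcd_div_gcd hgpos
  have h2ng : (2*n)/g = 2*(n/g) := Nat.mul_div_assoc 2 hgn
  have huodd : Odd u := by
    rcases Nat.even_or_odd u with he | ho
    · exfalso
      obtain ⟨c, hc⟩ := he
      have h2u : 2 ∣ u := ⟨c, by omega⟩
      have h2r : 2 ∣ (2*n)/g := h2ng ▸ Dvd.intro _ rfl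
      have := Nat.dvd_gcd h2u h2r
      rw [hcop] at this
      omega
    · exact ho
  obtain ⟨t2, ht2⟩ := huodd
  refine ⟨n / g, ?_⟩
  have hmJ : (n/g) * J = 2*n*t2 + n := by
    rw [hJu, ← mul_assoc, Nat.div_mul_cancel hgn, ht2]; ring
  calc ((n/g : ℕ) : ZMod (2*n)) * j = (((n/g) * J : ℕ) : ZMod (2*n)) := by
        rw [Nat.cast_mul, hJ, ZMod.natCast_val, ZMod.cast_id]
    _ = ((2*n*t2 + n : ℕ) : ZMod (2*n)) := by rw [hmJ]
    _ = (n : ZMod (2*n)) := by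
        push_cast
        rw [show ((2:ZMod (2*n)) * n * t2 + n : ZMod (2*n)) = (2*n : ℕ) * t2 + n by
          push_cast; ring, ZMod.natCast_self, zero_mul, zero_add]

lemma an_mem_zpowers (hn : ∃ s, n = 2^s) [NeZero n] {u : QuaternionGroup n} (hu : u ≠ 1) :
    (a (n : ZMod (2*n)) : QuaternionGroup n) ∈ Subgroup.zpowers u := by
  cases u with
  | a j =>
    have hj : j ≠ 0 := fun h => hu (by rw [h]; rfl)
    obtain ⟨m, hm⟩ := exists_mul_eq_n hn hj
    exact Subgroup.mem_zpowers_iff.mpr ⟨m, by rw [zpow_natCast, a_pow, hm]⟩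
  | xa j =>
    exact Subgroup.mem_zpowers_iff.mpr
      ⟨2, by rw [show (2:ℤ) = ((2:ℕ):ℤ) from rfl, zpow_natCast, xa_sq]⟩

lemma not_adj_a_xa (hn2 : 2 ≤ n) {i j : ZMod (2*n)} (hi0 : i ≠ 0)
    (hin : i ≠ (n : ZMod (2*n))) :
    ¬ (enhancedPowerGraph (QuaternionGroup n)).Adj (a i) (xa j) := by
  haveI : NeZero n := ⟨by omega⟩
  rintro ⟨hne, w, hx, hy⟩
  cases w with
  | a m =>
    obtain ⟨t, ht⟩ := mem_zpowers_a hy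
    exact (by simp at ht : False)
  | xa m =>
    rcases mem_zpowers_xa hx with h|h|h|h
    · rw [QuaternionGroup.one_def] at h
      exact hi0 (by injection h)
    · exact hin (by injection h)
    · simp at h
    · simp at h

lemma n_ne_zero (hn2 : 2 ≤ n) : (n : ZMod (2*n)) ≠ 0 := by
  haveI : NeZero (2*n) := ⟨by omega⟩
  intro h
  rw [ZMod.natCast_eq_zero_iff] at h
  exact absurd (Nat.le_of_dvd (by omega) h) (by omega)


lemma one_ne_zero' (hn2 : 2 ≤ n) : (1 : ZMod (2*n)) ≠ 0 := by
  haveI : NeZero (2*n) := ⟨by omega⟩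
  intro h
  have h1 : ((1:ℕ) : ZMod (2*n)).val = 1 := ZMod.val_cast_of_lt (by omega)
  rw [Nat.cast_one, h, ZMod.val_zero] at h1
  omega

lemma one_ne_n (hn2 : 2 ≤ n) : (1 : ZMod (2*n)) ≠ (n : ZMod (2*n)) := by
  haveI : NeZero (2*n) := ⟨by omega⟩
  intro h
  have h1 : ((1:ℕ) : ZMod (2*n)).val = 1 := ZMod.val_cast_of_lt (by omega)
  have h2 : ((n : ℕ) : ZMod (2*n)).val = n := ZMod.val_cast_of_lt (by omega)
  rw [Nat.cast_one, h, h2] at h1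
  omega

lemma domVerts_eq (hn2 : 2 ≤ n) (hn : ∃ s, n = 2^s) :
    (enhancedPowerGraph (QuaternionGroup n)).domVerts
      = {a 0, a ((n : ℕ) : ZMod (2*n))} := by
  haveI : NeZero n := ⟨by omega⟩
  ext v
  constructor
  · intro hv
    by_contra hc
    simp only [Set.mem_insert_iff, Set.mem_singleton_iff, not_or] at hc
    obtain ⟨hc0, hcn⟩ := hc
    cases v with
    | a i =>
      have hi0 : i ≠ 0 := fun h => hc0 (by rw [h])
      have hin : i ≠ ((n:ℕ) : ZMod (2*n)) := fun h => hcn (by rw [h])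
      have hne : xa 0 ≠ a i := by simp
      exact not_adj_a_xa hn2 hi0 hin (hv (xa 0) hne)
    | xa j =>
      have hne : a 1 ≠ xa j := by simp
      have hadj := (hv (a 1) hne).symm
      exact not_adj_a_xa hn2 (one_ne_zero' hn2) (one_ne_n hn2) hadj
  · intro hv
    simp only [Set.mem_insert_iff, Set.mem_singleton_iff] at hv
    rcases hv with rfl | rfl
    · intro u hu
      exact ⟨fun h => hu h.symm, u, Subgroup.one_mem _, Subgroup.mem_zpowers u⟩
    · intro u hu
      by_cases hu1 : u = 1
      · subst hu1
        refine ⟨fun h => hu h.symm, a ((n:ℕ) : ZMod (2*n)),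
          Subgroup.mem_zpowers _, Subgroup.one_mem _⟩
      · exact ⟨fun h => hu h.symm, u, an_mem_zpowers hn hu1, Subgroup.mem_zpowers u⟩

lemma castHom_fiber (hn2 : 2 ≤ n) {i j : ZMod (2*n)}
    (h : ZMod.castHom (dvd_mul_left n 2) (ZMod n) i
       = ZMod.castHom (dvd_mul_left n 2) (ZMod n) j) :
    j = i ∨ j = i + ((n:ℕ) : ZMod (2*n)) := by
  haveI : NeZero n := ⟨by omega⟩
  haveI : NeZero (2*n) := ⟨by omega⟩
  set d := j - i with hd
  have hcd : ZMod.castHom (dvd_mul_left n 2) (ZMod n) d = 0 := by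
    rw [hd, map_sub, h, sub_self]
  have hval : ((d.val : ℕ) : ZMod n) = 0 := by
    rw [ZMod.natCast_val]
    rw [ZMod.castHom_apply] at hcd
    exact hcd
  rw [ZMod.natCast_eq_zero_iff] at hval
  have hlt : d.val < 2*n := ZMod.val_lt d
  obtain ⟨c, hc⟩ := hval
  have hc2 : c = 0 ∨ c = 1 := by
    rcases Nat.lt_or_ge c 2 with h2 | h2
    · omega
    · exfalso; nlinarith
  have hdval : d = ((d.val : ℕ) : ZMod (2*n)) := (ZMod.natCast_zmod_val d).symm
  rcases hc2 with rfl | rfl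
  · left
    have hd0 : d = 0 := by rw [hdval, hc]; simp
    rw [hd] at hd0
    exact sub_eq_zero.mp hd0
  · right
    have hdn : d = ((n:ℕ) : ZMod (2*n)) := by rw [hdval, hc, mul_one]
    rw [← hdn, hd]; ring


lemma card_components (hn2 : 2 ≤ n) (hn : ∃ s, n = 2^s) :
    Nat.card (properEnhancedPowerGraph (QuaternionGroup n)).ConnectedComponent = n + 1 := by
  haveI : NeZero n := ⟨by omega⟩
  haveI : NeZero (2*n) := ⟨by omega⟩
  set Γ := properEnhancedPowerGraph (QuaternionGroup n) with hΓ
  have hdom := domVerts_eq hn2 hn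
  have hmem_a : ∀ i : ZMod (2*n), i ≠ 0 → i ≠ ((n:ℕ):ZMod (2*n)) →
      a i ∈ ((enhancedPowerGraph (QuaternionGroup n)).domVertsᶜ : Set (QuaternionGroup n)) := by
    intro i h0 hn'
    rw [Set.mem_compl_iff, hdom]
    simp only [Set.mem_insert_iff, Set.mem_singleton_iff, not_or]
    exact ⟨fun h => h0 (by injection h), fun h => hn' (by injection h)⟩
  have hmem_xa : ∀ j : ZMod (2*n),
      xa j ∈ ((enhancedPowerGraph (QuaternionGroup n)).domVertsᶜ : Set (QuaternionGroup n)) := by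
    intro j
    rw [Set.mem_compl_iff, hdom]
    simp
    exact fun h => by rw [QuaternionGroup.one_def] at h; cases h
  have ha_constraints : ∀ {i : ZMod (2*n)},
      a i ∈ ((enhancedPowerGraph (QuaternionGroup n)).domVertsᶜ : Set (QuaternionGroup n)) →
      i ≠ 0 ∧ i ≠ ((n:ℕ):ZMod (2*n)) := by
    intro i hi
    rw [Set.mem_compl_iff, hdom] at hi
    simp only [Set.mem_insert_iff, Set.mem_singleton_iff, not_or] at hi
    exact ⟨fun h => hi.1 (by rw [h]), fun h => hi.2 (by rw [h])⟩
  set φ := ZMod.castHom (dvd_mul_left n 2) (ZMod n) with hφ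
  have hφsub : ∀ m : ZMod (2*n), φ (m - ((n:ℕ):ZMod (2*n))) = φ m := by
    intro m
    rw [map_sub, map_natCast, ZMod.natCast_self, sub_zero]
  set label : ((enhancedPowerGraph (QuaternionGroup n)).domVertsᶜ : Set (QuaternionGroup n))
      → ZMod n ⊕ Unit :=
    fun v => match v.1 with
      | .a _ => Sum.inr ()
      | .xa i => Sum.inl (φ i) with hlabel
  have hadj : ∀ v w, Γ.Adj v w → label v = label w := by
    rintro ⟨x, hx⟩ ⟨y, hy⟩ hvw
    have hΓadj : (enhancedPowerGraph (QuaternionGroup n)).Adj x y := hvw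
    cases x with
    | a i =>
      cases y with
      | a j => rfl
      | xa j =>
        obtain ⟨hi0, hin⟩ := ha_constraints hx
        exact absurd hΓadj (not_adj_a_xa hn2 hi0 hin)
    | xa i =>
      cases y with
      | a j =>
        obtain ⟨hj0, hjn⟩ := ha_constraints hy
        exact absurd hΓadj.symm (not_adj_a_xa hn2 hj0 hjn)
      | xa j =>
        obtain ⟨hne, w, hxw, hyw⟩ := hΓadj
        cases w with
        | a m =>
          obtain ⟨t, ht⟩ := mem_zpowers_a hxw
          simp at ht
        | xa m =>
          have hi : φ i = φ m := by
            rcases mem_zpowers_xa hxw with h|h|h|h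
            · rw [QuaternionGroup.one_def] at h; cases h
            · simp at h
            · rw [show i = m by injection h]
            · rw [show i = m - ((n:ℕ):ZMod (2*n)) by injection h, hφsub]
          have hj : φ j = φ m := by
            rcases mem_zpowers_xa hyw with h|h|h|h
            · rw [QuaternionGroup.one_def] at h; cases h
            · simp at h
            · rw [show j = m by injection h]
            · rw [show j = m - ((n:ℕ):ZMod (2*n)) by injection h, hφsub]
          show Sum.inl (φ i) = Sum.inl (φ j)
          rw [hi, hj]
  have hwalk : ∀ (v w : ((enhancedPowerGraph (QuaternionGroup n)).domVertsᶜ :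
      Set (QuaternionGroup n))) (p : Γ.Walk v w), label v = label w := by
    intro v w p
    induction p with
    | nil => rfl
    | cons h p ih => exact (hadj _ _ h).trans ih
  let e : Γ.ConnectedComponent ≃ (ZMod n ⊕ Unit) :=
    { toFun := SimpleGraph.ConnectedComponent.lift label (fun v w p _ => hwalk v w p)
      invFun := fun s => match s with
        | Sum.inl r => Γ.connectedComponentMk ⟨xa ((r.val : ℕ) : ZMod (2*n)), hmem_xa _⟩
        | Sum.inr _ => Γ.connectedComponentMk ⟨a 1, hmem_a 1 (one_ne_zero' hn2) (one_ne_n hn2)⟩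
      left_inv := by
        apply SimpleGraph.ConnectedComponent.ind
        rintro ⟨x, hx⟩
        cases x with
        | a i =>
          show Γ.connectedComponentMk ⟨a 1, _⟩ = Γ.connectedComponentMk ⟨a i, hx⟩
          obtain ⟨hi0, hin⟩ := ha_constraints hx
          by_cases h1 : i = 1
          · exact congrArg _ (Subtype.ext (show QuaternionGroup.a 1 = a i from congrArg _ h1.symm))
          · apply SimpleGraph.ConnectedComponent.eq.mpr
            apply SimpleGraph.Adj.reachable
            show (enhancedPowerGraph (QuaternionGroup n)).Adj (a 1) (a i)
            refine ⟨fun h => h1 (by injection h with h'; exact h'.symm), a 1,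
              Subgroup.mem_zpowers _, ?_⟩
            refine Subgroup.mem_zpowers_iff.mpr ⟨i.val, ?_⟩
            rw [zpow_natCast, a_one_pow, ZMod.natCast_zmod_val]
        | xa i =>
          show Γ.connectedComponentMk ⟨xa (((φ i).val : ℕ) : ZMod (2*n)), _⟩
              = Γ.connectedComponentMk ⟨xa i, hx⟩
          set i' := (((φ i).val : ℕ) : ZMod (2*n)) with hi'
          have hφi' : φ i' = φ i := by
            rw [hi', map_natCast, ZMod.natCast_zmod_val]
          rcases castHom_fiber hn2 hφi' with heq | heq
          · exact congrArg _ (Subtype.ext (show xa i' = xa i from congrArg _ heq.symm))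
          · apply SimpleGraph.ConnectedComponent.eq.mpr
            apply SimpleGraph.Adj.reachable
            show (enhancedPowerGraph (QuaternionGroup n)).Adj (xa i') (xa i)
            refine ⟨fun h => ?_, xa i', Subgroup.mem_zpowers _, ?_⟩
            · have h' : i' = i := by injection h
              rw [heq] at h'
              exact n_ne_zero hn2 (left_eq_add.mp h')
            · have h0 : ((2*n : ℕ) : ZMod (2*n)) = 0 := ZMod.natCast_self _
              push_cast at h0
              have hsub : i' + ((n:ℕ):ZMod (2*n)) = i' - ((n:ℕ):ZMod (2*n)) := by
                linear_combination h0
              refine Subgroup.mem_zpowers_iff.mpr ⟨3, ?_⟩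
              rw [show (3:ℤ) = ((3:ℕ):ℤ) from rfl, zpow_natCast, xa_pow_three, heq, hsub]
      right_inv := by
        rintro (r | u)
        · show Sum.inl (φ ((r.val : ℕ) : ZMod (2*n))) = Sum.inl r
          rw [map_natCast, ZMod.natCast_zmod_val]
        · show Sum.inr () = Sum.inr u
          rfl }
  rw [Nat.card_congr e, Nat.card_sum, Nat.card_zmod]
  simp

end QGaux

/-- For `k ≥ 3`, the number of connected components of `G_E**(Q_{2^k})` is
`2^{k-2} + 1`. -/
theorem stmt_16 (k : ℕ) (hk : 3 ≤ k) :
    Nat.card (properEnhancedPowerGraph (QuaternionGroup (2 ^ (k - 2)))).ConnectedComponent =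
      2 ^ (k - 2) + 1 := by
  have h2 : 2 ≤ 2 ^ (k - 2) := by
    calc 2 = 2 ^ 1 := rfl
    _ ≤ 2 ^ (k - 2) := Nat.pow_le_pow_right (by norm_num) (by omega)
  exact QGaux.card_components h2 ⟨k - 2, rfl⟩
end
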